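/- arXiv:0704.3278 — 4 statements merged into one kernel-verified Lean document; each statement's English description precedes it below -/
import Mathlib

section
/- For every prime p and every integer ℓ ≥ 1 one has r^{p^ℓ} ∈ pP + [P,P]; that is, there exists s ∈ P with p·s − r^{p^ℓ} ∈ [P,P], so the class of r^{p^ℓ} in P_cyc = P/[P,P] is divisible by p. -/
noncomputable section

/-- The set of commutators `a*b - b*a` in a ring. -/
def commSet (A : Type*) [Ring A] : Set A := {x | ∃ a b : A, x = a * b - b * a}

/-- The additive subgroup `[A,A]` generated by commutators. -/
def commAdd (A : Type*) [Ring A] : AddSubgroup A := AddSubgroup.closure (commSet A)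

/-- `P = ℤ⟨x₁,…,xₙ,y₁,…,yₙ⟩`, the free associative `ℤ`-algebra on `2n` generators. -/
abbrev P (n : ℕ) : Type := FreeAlgebra ℤ (Fin n ⊕ Fin n)

/-- The generator `xᵢ`. -/
def Xg {n : ℕ} (i : Fin n) : P n := FreeAlgebra.ι ℤ (Sum.inl i)

/-- The generator `yᵢ`. -/
def Yg {n : ℕ} (i : Fin n) : P n := FreeAlgebra.ι ℤ (Sum.inr i)

/-- `r = ∑ᵢ (xᵢyᵢ − yᵢxᵢ)`. -/
def rEl (n : ℕ) : P n := ∑ i : Fin n, (Xg i * Yg i - Yg i * Xg i)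

namespace Stmt1Aux

variable {A : Type*} [Ring A]

lemma commutator_mem (a b : A) : a * b - b * a ∈ commAdd A :=
  AddSubgroup.subset_closure ⟨a, b, rfl⟩

/-- The additive subgroup of `p`-multiples. -/
def pMul (p : ℕ) (A : Type*) [Ring A] : AddSubgroup A where
  carrier := Set.range fun s : A => p • s
  zero_mem' := ⟨0, by simp⟩
  add_mem' := by rintro _ _ ⟨s, rfl⟩ ⟨t, rfl⟩; exact ⟨s + t, by simp [smul_add]⟩
  neg_mem' := by rintro _ ⟨s, rfl⟩; exact ⟨-s, by simp⟩

/-- `pA + [A,A]`. -/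
def M (p : ℕ) (A : Type*) [Ring A] : AddSubgroup A := pMul p A ⊔ commAdd A

lemma mem_M_of_comm {p : ℕ} {x : A} (h : x ∈ commAdd A) : x ∈ M p A :=
  SetLike.le_def.mp le_sup_right h

lemma mem_pMul {p : ℕ} (s : A) : p • s ∈ pMul p A := ⟨s, rfl⟩

lemma mem_M_of_p {p : ℕ} (s : A) : p • s ∈ M p A :=
  SetLike.le_def.mp le_sup_left (mem_pMul s)

/-- the word product associated to `f : ZMod p → Bool`. -/
def wp (a b : A) (p : ℕ) (f : ZMod p → Bool) : A :=
  (List.ofFn fun i : Fin p => cond (f ((i : ℕ) : ZMod p)) a b).prod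

lemma expand (a b : A) (m : ℕ) :
    (a + b) ^ m = ∑ g : Fin m → Bool, (List.ofFn fun i => cond (g i) a b).prod := by
  induction m with
  | zero => simp
  | succ m ih =>
    have e1 : ∑ g : Fin (m + 1) → Bool, (List.ofFn fun i => cond (g i) a b).prod
        = ∑ x : Bool × (Fin m → Bool),
            (List.ofFn fun i : Fin (m + 1) => cond (Fin.cons (α := fun _ => Bool) x.1 x.2 i) a b).prod :=
      (Fintype.sum_equiv (Fin.consEquiv fun _ : Fin (m + 1) => Bool)
        (fun x : Bool × (Fin m → Bool) =>
          (List.ofFn fun i : Fin (m + 1) => cond (Fin.cons (α := fun _ => Bool) x.1 x.2 i) a b).prod)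
        (fun g : Fin (m + 1) → Bool => (List.ofFn fun i => cond (g i) a b).prod)
        (fun x => by rcases x with ⟨c, g⟩; rfl)).symm
    rw [pow_succ', ih, add_mul, Finset.mul_sum, Finset.mul_sum, e1,
      Fintype.sum_prod_type, Fintype.sum_bool]
    simp [List.ofFn_succ]


/-- `Fin p ≃ ZMod p` by the natural cast. -/
def zEquiv (p : ℕ) [NeZero p] : Fin p ≃ ZMod p where
  toFun i := ((i : ℕ) : ZMod p)
  invFun z := ⟨z.val, ZMod.val_lt z⟩
  left_inv i := by
    apply Fin.ext
    simp [ZMod.val_natCast_of_lt i.isLt]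
  right_inv z := ZMod.natCast_rightInverse z

lemma expandZ (a b : A) (p : ℕ) [NeZero p] :
    (a + b) ^ p = ∑ f : ZMod p → Bool, wp a b p f := by
  rw [expand]
  exact (Fintype.sum_equiv
    (Equiv.arrowCongr (zEquiv p).symm (Equiv.refl Bool) : (ZMod p → Bool) ≃ (Fin p → Bool))
    (fun f : ZMod p → Bool => wp a b p f)
    (fun g : Fin p → Bool => (List.ofFn fun i => cond (g i) a b).prod)
    (fun f => rfl)).symm

lemma rot_one (a b : A) (m : ℕ) (f : ZMod (m + 1) → Bool) :
    wp a b (m + 1) (fun x => f (x + 1)) - wp a b (m + 1) f ∈ commAdd A := by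
  set L : List A := List.ofFn fun i : Fin m => cond (f (((i : ℕ) : ZMod (m + 1)) + 1)) a b with hLdef
  have h1 : wp a b (m + 1) f = cond (f 0) a b * L.prod := by
    unfold wp
    rw [List.ofFn_succ, List.prod_cons]
    have e0 : (((0 : Fin (m + 1)) : ℕ) : ZMod (m + 1)) = 0 := by norm_num
    have etail : ∀ i : Fin m,
        (((i.succ : Fin (m + 1)) : ℕ) : ZMod (m + 1)) = ((i : ℕ) : ZMod (m + 1)) + 1 := by
      intro i; push_cast [Fin.val_succ]; ring
    simp only [e0, etail, hLdef]
  have h2 : wp a b (m + 1) (fun x => f (x + 1)) = L.prod * cond (f 0) a b := by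
    unfold wp
    rw [List.ofFn_succ', List.concat_eq_append, List.prod_append, List.prod_cons, List.prod_nil,
      mul_one]
    have e1 : ∀ i : Fin m,
        (((i.castSucc : Fin (m + 1)) : ℕ) : ZMod (m + 1)) = ((i : ℕ) : ZMod (m + 1)) := by
      intro i; norm_num [Fin.coe_castSucc]
    have e2 : (((Fin.last m : Fin (m + 1)) : ℕ) : ZMod (m + 1)) + 1 = 0 := by
      rw [Fin.val_last,
        show ((m : ℕ) : ZMod (m + 1)) + 1 = (((m + 1 : ℕ)) : ZMod (m + 1)) by push_cast; ring,
        ZMod.natCast_self]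
    simp only [e1, e2, hLdef]
  rw [h1, h2]
  exact commutator_mem L.prod (cond (f 0) a b)

lemma rot_nat (a b : A) (m : ℕ) (f : ZMod (m + 1) → Bool) (k : ℕ) :
    wp a b (m + 1) (fun x => f (x + (k : ZMod (m + 1)))) - wp a b (m + 1) f ∈ commAdd A := by
  induction k with
  | zero =>
    have e : (fun x : ZMod (m + 1) => f (x + ((0 : ℕ) : ZMod (m + 1)))) = f := by
      funext x; norm_num
    rw [e, sub_self]
    exact AddSubgroup.zero_mem _
  | succ k ih =>
    have e : (fun x : ZMod (m + 1) => f (x + ((k + 1 : ℕ) : ZMod (m + 1))))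
        = fun x => (fun y => f (y + (k : ZMod (m + 1)))) (x + 1) := by
      funext x
      congr 1
      push_cast
      ring
    have h1 := rot_one a b m (fun y => f (y + (k : ZMod (m + 1))))
    rw [e]
    have := AddSubgroup.add_mem _ h1 ih
    convert this using 1
    abel

lemma rot_zmod (a b : A) (p : ℕ) [NeZero p] (f : ZMod p → Bool) (k : ZMod p) :
    wp a b p (fun x => f (x + k)) - wp a b p f ∈ commAdd A := by
  obtain ⟨m, rfl⟩ : ∃ m, p = m + 1 := Nat.exists_eq_succ_of_ne_zero (NeZero.ne p)
  have hk : ((k.val : ℕ) : ZMod (m + 1)) = k := ZMod.natCast_rightInverse k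
  rw [← hk]
  exact rot_nat a b m f k.val


lemma frob (p : ℕ) (hp : p.Prime) (a b : A) :
    (a + b) ^ p - a ^ p - b ^ p ∈ M p A := by
  classical
  haveI : Fact p.Prime := ⟨hp⟩
  haveI : NeZero p := ⟨hp.ne_zero⟩
  rw [expandZ a b p]
  set C : (ZMod p → Bool) → Prop := fun f => ∀ x, f x = f 0 with hC
  have hct : wp a b p (fun _ => true) = a ^ p := by
    unfold wp
    simp [List.prod_replicate]
  have hcf : wp a b p (fun _ => false) = b ^ p := by
    unfold wp
    simp [List.prod_replicate]
  have hsplit := Finset.sum_filter_add_sum_filter_not Finset.univ C (wp a b p)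
  have hconstset : Finset.univ.filter C = {fun _ => true, fun _ => false} := by
    ext f
    simp only [Finset.mem_filter, Finset.mem_univ, true_and, Finset.mem_insert,
      Finset.mem_singleton]
    constructor
    · intro h
      cases hb : f 0
      · right; funext x; rw [h x, hb]
      · left; funext x; rw [h x, hb]
    · rintro (rfl | rfl) x <;> rfl
  have hne : (fun _ : ZMod p => true) ≠ (fun _ : ZMod p => false) := by
    intro h; simpa using congrFun h 0
  have hconstsum : ∑ f ∈ Finset.univ.filter C, wp a b p f = a ^ p + b ^ p := by
    rw [hconstset, Finset.sum_pair hne, hct, hcf]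
  have hred : (∑ f : ZMod p → Bool, wp a b p f) - a ^ p - b ^ p
      = ∑ f ∈ Finset.univ.filter (fun f => ¬ C f), wp a b p f := by
    rw [← hsplit, hconstsum]; abel
  rw [hred]
  let st : Setoid (ZMod p → Bool) :=
    ⟨fun f g => ∃ k : ZMod p, (fun x => f (x + k)) = g,
      ⟨fun f => ⟨0, by funext x; rw [add_zero]⟩,
       fun {f g} h => by
         obtain ⟨k, hk⟩ := h
         exact ⟨-k, by funext x; rw [← hk]; show f (x + -k + k) = f x; congr 1; ring⟩,
       fun {f g h} h1 h2 => by
         obtain ⟨k, hk⟩ := h1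
         obtain ⟨k', hk'⟩ := h2
         refine ⟨k' + k, ?_⟩
         funext x
         rw [← hk']
         show f (x + (k' + k)) = g (x + k')
         rw [← hk]
         show f (x + (k' + k)) = f (x + k' + k)
         congr 1
         ring⟩⟩
  haveI : Fintype (Quotient st) := Fintype.ofFinite _
  rw [← Finset.sum_fiberwise (Finset.univ.filter (fun f => ¬ C f))
    (fun f => (⟦f⟧ : Quotient st)) (wp a b p)]
  refine AddSubgroup.sum_mem _ fun ω _ => ?_
  rcases Finset.eq_empty_or_nonempty
      ((Finset.univ.filter (fun f => ¬ C f)).filter fun f => (⟦f⟧ : Quotient st) = ω) with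
    hT | ⟨f₀, hf₀⟩
  · rw [hT, Finset.sum_empty]
    exact AddSubgroup.zero_mem _
  · simp only [Finset.mem_filter, Finset.mem_univ, true_and] at hf₀
    obtain ⟨hf₀N, hf₀ω⟩ := hf₀
    -- injectivity of the orbit map
    have hinj : Function.Injective
        (fun k : ZMod p => (fun x => f₀ (x + k) : ZMod p → Bool)) := by
      intro k k' h
      by_contra hne
      apply hf₀N
      have hd : k - k' ≠ 0 := sub_ne_zero.mpr hne
      have hper : ∀ x, f₀ (x + (k - k')) = f₀ x := by
        intro x
        have h2 : f₀ (x - k' + k) = f₀ (x - k' + k') := congrFun h (x - k')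
        rw [show x - k' + k = x + (k - k') by ring, show x - k' + k' = x by ring] at h2
        exact h2
      have hper' : ∀ (m : ℕ) (x : ZMod p), f₀ (x + m • (k - k')) = f₀ x := by
        intro m
        induction m with
        | zero => intro x; simp
        | succ m ih =>
          intro x
          rw [succ_nsmul, ← add_assoc]
          exact (hper _).trans (ih x)
      intro x
      have hx : ((x * (k - k')⁻¹).val : ℕ) • (k - k') = x := by
        rw [nsmul_eq_mul, ZMod.natCast_rightInverse (x * (k - k')⁻¹),
          inv_mul_cancel_right₀ hd]
      calc f₀ x = f₀ (0 + ((x * (k - k')⁻¹).val : ℕ) • (k - k')) := by rw [zero_add, hx]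
        _ = f₀ 0 := hper' _ 0
    -- the fibre is the orbit of f₀
    have hTeq : (Finset.univ.filter (fun f => ¬ C f)).filter
          (fun f => (⟦f⟧ : Quotient st) = ω)
        = Finset.image (fun k : ZMod p => (fun x => f₀ (x + k) : ZMod p → Bool))
            Finset.univ := by
      ext g
      simp only [Finset.mem_filter, Finset.mem_univ, true_and, Finset.mem_image]
      constructor
      · rintro ⟨hgN, hgω⟩
        have : (⟦f₀⟧ : Quotient st) = ⟦g⟧ := by rw [hf₀ω, hgω]
        obtain ⟨k, hk⟩ := Quotient.exact this
        exact ⟨k, hk⟩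
      · rintro ⟨k, rfl⟩
        constructor
        · intro hCg
          apply hf₀N
          intro y
          have h1 : f₀ (y - k + k) = f₀ (0 + k) := hCg (y - k)
          have h2 : f₀ (-k + k) = f₀ (0 + k) := hCg (-k)
          rw [show y - k + k = y by ring] at h1
          rw [show -k + k = (0 : ZMod p) by ring] at h2
          exact h1.trans h2.symm
        · rw [← hf₀ω]
          have hrel : st.r f₀ (fun x => f₀ (x + k)) := ⟨k, rfl⟩
          exact (Quotient.sound hrel).symm
    rw [hTeq, Finset.sum_image (fun x _ y _ h => hinj h)]
    have key : ∑ k : ZMod p, wp a b p (fun x => f₀ (x + k))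
        = (∑ k : ZMod p, (wp a b p (fun x => f₀ (x + k)) - wp a b p f₀))
          + p • wp a b p f₀ := by
      rw [Finset.sum_sub_distrib, Finset.sum_const, Finset.card_univ, ZMod.card]
      abel
    rw [key]
    exact AddSubgroup.add_mem _
      (mem_M_of_comm (AddSubgroup.sum_mem _ fun k _ => rot_zmod a b p f₀ k))
      (mem_M_of_p _)

lemma pow_mul_pow (a b : A) (m : ℕ) : (a * b) ^ (m + 1) = a * ((b * a) ^ m * b) := by
  induction m with
  | zero => simp
  | succ m ih =>
    rw [pow_succ', ih, pow_succ']
    simp [mul_assoc]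

lemma pow_comm_mem (a b : A) (m : ℕ) :
    (a * b) ^ (m + 1) - (b * a) ^ (m + 1) ∈ commAdd A := by
  have h : (b * a) ^ (m + 1) = ((b * a) ^ m * b) * a := by
    rw [pow_succ, mul_assoc]
  rw [pow_mul_pow, h]
  exact commutator_mem a ((b * a) ^ m * b)

lemma comm_pow_mem (p : ℕ) (hp : p.Prime) {t : A} (ht : t ∈ commAdd A) :
    t ^ p ∈ M p A := by
  induction ht using AddSubgroup.closure_induction with
  | mem x hx =>
    obtain ⟨u, v, rfl⟩ := hx
    obtain ⟨m, hm⟩ : ∃ m, p = m + 1 := ⟨p - 1, (Nat.succ_pred_eq_of_pos hp.pos).symm⟩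
    have hf := frob p hp (u * v) (-(v * u))
    rw [sub_eq_add_neg]
    have hYW : (u * v) ^ p - (v * u) ^ p ∈ M p A := by
      rw [hm]
      exact mem_M_of_comm (pow_comm_mem u v m)
    rcases hp.eq_two_or_odd' with h2 | hodd
    · subst h2
      rw [neg_pow, neg_one_sq, one_mul] at hf
      have h2Y : (2 : ℕ) • ((u * v) ^ 2) ∈ M 2 A := mem_M_of_p _
      have hx : (u * v + -(v * u)) ^ 2
          = ((u * v + -(v * u)) ^ 2 - (u * v) ^ 2 - (v * u) ^ 2)
            + (2 : ℕ) • ((u * v) ^ 2) - ((u * v) ^ 2 - (v * u) ^ 2) := by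
        abel
      rw [hx]
      exact AddSubgroup.sub_mem _ (AddSubgroup.add_mem _ hf h2Y) hYW
    · rw [Odd.neg_pow hodd] at hf
      have hx : (u * v + -(v * u)) ^ p
          = ((u * v + -(v * u)) ^ p - (u * v) ^ p - -((v * u) ^ p))
            + ((u * v) ^ p - (v * u) ^ p) := by abel
      rw [hx]
      exact AddSubgroup.add_mem _ hf hYW
  | zero =>
    rw [zero_pow hp.ne_zero]
    exact AddSubgroup.zero_mem _
  | add x y hx hy ihx ihy =>
    have hf := frob p hp x y
    have he : (x + y) ^ p = ((x + y) ^ p - x ^ p - y ^ p) + x ^ p + y ^ p := by abel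
    rw [he]
    exact AddSubgroup.add_mem _ (AddSubgroup.add_mem _ hf ihx) ihy
  | neg x hx ihx =>
    rcases Nat.even_or_odd p with he | ho
    · rw [he.neg_pow]
      exact ihx
    · rw [ho.neg_pow]
      exact AddSubgroup.neg_mem _ ihx

lemma M_pow_mem (p : ℕ) (hp : p.Prime) {t : A} (ht : t ∈ M p A) : t ^ p ∈ M p A := by
  rw [M, AddSubgroup.mem_sup] at ht
  obtain ⟨y, ⟨s, rfl⟩, z, hz, rfl⟩ := ht
  have hf := frob p hp ((p : ℕ) • s) z
  have hys : ((p : ℕ) • s) ^ p ∈ M p A := by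
    have hc : ((p : ℕ) • s) ^ p = (p : ℕ) • (((p : A)) ^ (p - 1) * s ^ p) := by
      have hpp : p - 1 + 1 = p := Nat.succ_pred_eq_of_pos hp.pos
      rw [nsmul_eq_mul, (Nat.cast_commute p s).mul_pow, nsmul_eq_mul, ← mul_assoc, ← pow_succ',
        hpp]
    rw [hc]
    exact mem_M_of_p _
  have hzp : z ^ p ∈ M p A := comm_pow_mem p hp hz
  have he : ((p : ℕ) • s + z) ^ p
      = (((p : ℕ) • s + z) ^ p - ((p : ℕ) • s) ^ p - z ^ p)
        + ((p : ℕ) • s) ^ p + z ^ p := by abel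
  rw [he]
  exact AddSubgroup.add_mem _ (AddSubgroup.add_mem _ hf hys) hzp

end Stmt1Aux

open Stmt1Aux in
/-- For every prime `p` and `ℓ ≥ 1`, `r^{p^ℓ} ∈ pP + [P,P]`: there is `s ∈ P` with
`p·s − r^{p^ℓ} ∈ [P,P]`, so the class of `r^{p^ℓ}` in `P_cyc` is divisible by `p`. -/
theorem stmt_1 (n : ℕ) (hn : 1 ≤ n) (p : ℕ) (hp : p.Prime) (ℓ : ℕ) (hℓ : 1 ≤ ℓ) :
    ∃ s : P n, p • s - rEl n ^ p ^ ℓ ∈ commAdd (P n) := by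
  have hr : rEl n ∈ commAdd (P n) :=
    AddSubgroup.sum_mem _ fun i _ => commutator_mem (Xg i) (Yg i)
  have hM : ∀ m : ℕ, rEl n ^ p ^ m ∈ M p (P n) := by
    intro m
    induction m with
    | zero =>
      rw [pow_zero, pow_one]
      exact mem_M_of_comm hr
    | succ m ih =>
      rw [pow_succ, pow_mul]
      exact M_pow_mem p hp ih
  have h := hM ℓ
  rw [M, AddSubgroup.mem_sup] at h
  obtain ⟨y, ⟨s, rfl⟩, z, hz, hsum⟩ := h
  refine ⟨s, ?_⟩
  have : p • s - rEl n ^ p ^ ℓ = -z := by rw [← hsum]; abel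
  rw [this]
  exact AddSubgroup.neg_mem _ hz
end
end

section
/- A is free as a ℤ-module, with basis the elements z_{a₁,b₁}·r'·z_{a₂,b₂}·r'·⋯·r'·z_{a_{m+1},b_{m+1}} over all integers m ≥ 0 and all nonnegative integers a₁,b₁,…,a_{m+1},b_{m+1} (for m = 0 this is the single factor z_{a₁,b₁}; in particular z_{0,0} = 1). -/
noncomputable section

/-- `F = ℤ⟨x,y,r'⟩`, the free associative `ℤ`-algebra on three generators
(`x`, `y` of degree 1 and `r'` of degree 2). -/
abbrev F3 : Type := FreeAlgebra ℤ (Fin 3)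

/-- The generator `x`. -/
def xF : F3 := FreeAlgebra.ι ℤ 0

/-- The generator `y`. -/
def yF : F3 := FreeAlgebra.ι ℤ 1

/-- The generator `r'`. -/
def rF : F3 := FreeAlgebra.ι ℤ 2

/-- The relation presenting `A := F/((xy − yx + r'))`. -/
def relA : F3 → F3 → Prop := fun a b => a = xF * yF - yF * xF + rF ∧ b = 0

/-- `A := F/((xy − yx + r'))`. -/
abbrev Alg : Type := RingQuot relA

/-- The quotient map `F → A`. -/
def πA : F3 →+* Alg := RingQuot.mkRingHom relA

/-- The image of `x` in `A`. -/
def xA : Alg := πA xF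

/-- The image of `y` in `A`. -/
def yA : Alg := πA yF

/-- The image of `r'` in `A`. -/
def rA : Alg := πA rF

/-- `z_{a,b} := (xy)^b x^{a−b}` if `a ≥ b`, and `(yx)^a y^{b−a}` if `a < b`. -/
def z (a b : ℕ) : Alg :=
  if b ≤ a then (xA * yA) ^ b * xA ^ (a - b) else (yA * xA) ^ a * yA ^ (b - a)


open Submodule


section Triangular
variable {R M I J : Type*} [CommRing R] [AddCommGroup M] [Module R M]

theorem triangular_basis (b : Module.Basis J R M) (e : I ≃ J) (ρ : J → ℕ) (v : I → M)
    (hv : ∀ i, v i - b (e i) ∈ span R (b '' {j | ρ j < ρ (e i)})) :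
    ∃ B : Module.Basis I R M, ∀ i, B i = v i := by
  classical
  have hspan : ∀ n (j : J), ρ j < n → b j ∈ span R (Set.range v) := by
    intro n
    induction n with
    | zero => intro j h; omega
    | succ n ih =>
      intro j hj
      have h1 : v (e.symm j) - b j ∈ span R (b '' {j' | ρ j' < ρ j}) := by
        simpa using hv (e.symm j)
      have h2 : v (e.symm j) - b j ∈ span R (Set.range v) := by
        refine span_le.mpr ?_ h1
        rintro _ ⟨j', hj', rfl⟩
        exact ih j' (by simp only [Set.mem_setOf_eq] at hj'; omega)
      have h3 : v (e.symm j) ∈ span R (Set.range v) := subset_span ⟨_, rfl⟩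
      simpa using sub_mem h3 h2
  have hsp : ⊤ ≤ span R (Set.range v) := by
    rw [← b.span_eq]
    refine span_le.mpr ?_
    rintro _ ⟨j, rfl⟩
    exact hspan (ρ j + 1) j (Nat.lt_succ_self _)
  have hli : LinearIndependent R v := by
    rw [linearIndependent_iff]
    intro l hl
    by_contra hne
    have hsupp : l.support.Nonempty := Finsupp.support_nonempty_iff.mpr hne
    obtain ⟨i0, hi0mem, hi0max⟩ := l.support.exists_max_image (fun i => ρ (e i)) hsupp
    have hcoef : ∀ i ∈ l.support, (b.repr (v i)) (e i0) = if i = i0 then 1 else 0 := by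
      intro i hi
      have herr : (b.repr (v i - b (e i))) (e i0) = 0 := by
        by_contra h
        have hmem := b.mem_span_image.mp (hv i) (Finsupp.mem_support_iff.mpr h)
        simp only [Set.mem_setOf_eq] at hmem
        have := hi0max i hi
        omega
      have hrw : b.repr (v i) = b.repr (b (e i)) + b.repr (v i - b (e i)) := by
        rw [← map_add]
        congr 1
        abel
      rw [hrw, Finsupp.add_apply, herr, add_zero, b.repr_self, Finsupp.single_apply]
      simp [e.apply_eq_iff_eq, eq_comm]
    have hval : (b.repr (Finsupp.linearCombination R v l)) (e i0) = l i0 := by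
      rw [Finsupp.linearCombination_apply, map_finsuppSum, Finsupp.sum_apply, Finsupp.sum]
      have : ∀ i ∈ l.support, (b.repr (l i • v i)) (e i0)
          = if i = i0 then l i else 0 := by
        intro i hi
        rw [map_smul, Finsupp.smul_apply, hcoef i hi]
        simp [mul_ite]
      rw [Finset.sum_congr rfl this, Finset.sum_ite_eq' l.support i0 (fun i => l i)]
      simp [hi0mem]
    rw [hl, map_zero, Finsupp.zero_apply] at hval
    exact (Finsupp.mem_support_iff.mp hi0mem) hval.symm
  exact ⟨Module.Basis.mk hli hsp, fun i => Module.Basis.mk_apply _ _ _⟩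

end Triangular

namespace Stmt5


/-- binary value of a word (starting accumulator 0) -/
def val (w : List (Fin 2)) : ℕ := w.foldl (fun a d => 2 * a + d.val) 0

/-- binary encoding with leading 1: order = (length, lex with 1 > 0) -/
def enc (w : List (Fin 2)) : ℕ := w.foldl (fun a d => 2 * a + d.val) 1

theorem foldl_eq (c : ℕ) (w : List (Fin 2)) :
    w.foldl (fun a d => 2 * a + d.val) c = c * 2 ^ w.length + val w := by
  induction w generalizing c with
  | nil => simp [val]
  | cons d w ih =>
    show w.foldl _ (2*c+d.val) = _
    rw [ih (2*c+d.val)]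
    have : val (d :: w) = d.val * 2 ^ w.length + val w := by
      show w.foldl _ (2*0+d.val) = _
      rw [ih (2*0+d.val)]; ring_nf
    rw [this]; simp [List.length_cons]; ring

theorem val_lt (w : List (Fin 2)) : val w < 2 ^ w.length := by
  induction w with
  | nil => simp [val]
  | cons d w ih =>
    have hd : d.val ≤ 1 := Fin.is_le d
    have : val (d :: w) = d.val * 2 ^ w.length + val w := by
      show w.foldl _ (2*0+d.val) = _
      rw [foldl_eq]; ring_nf
    rw [this]
    simp only [List.length_cons, pow_succ]
    nlinarith

theorem enc_eq (w : List (Fin 2)) : enc w = 2 ^ w.length + val w := by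
  rw [enc, foldl_eq]; ring

theorem enc_lt (w : List (Fin 2)) : enc w < 2 ^ (w.length + 1) := by
  rw [enc_eq, pow_succ]; have := val_lt w; omega

theorem enc_ge (w : List (Fin 2)) : 2 ^ w.length ≤ enc w := by
  rw [enc_eq]; omega

theorem enc_append (s u : List (Fin 2)) :
    enc (s ++ u) = enc s * 2 ^ u.length + val u := by
  rw [enc, List.foldl_append, ← enc, foldl_eq]

theorem length_le_of_enc_lt {u' u : List (Fin 2)} (h : enc u' < enc u) :
    u'.length ≤ u.length := by
  by_contra hc
  have h1 := enc_ge u'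
  have h2 := enc_lt u
  have : 2 ^ (u.length + 1) ≤ 2 ^ u'.length := Nat.pow_le_pow_right (by norm_num) (by omega)
  omega

theorem enc_append_lt (s : List (Fin 2)) {u' u : List (Fin 2)} (h : enc u' < enc u) :
    enc (s ++ u') < enc (s ++ u) := by
  have hlen : u'.length ≤ u.length := length_le_of_enc_lt h
  have hs := enc_ge s
  have hs1 : 1 ≤ enc s := le_trans (Nat.one_le_two_pow) hs
  rw [enc_append, enc_append]
  rcases Nat.lt_or_ge u'.length u.length with hlt | hge
  · have h1 : val u' < 2 ^ u'.length := val_lt u'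
    have h2 : enc s * 2 ^ u'.length + val u' < (enc s + 1) * 2 ^ u'.length := by nlinarith
    have h3 : (enc s + 1) * 2 ^ u'.length ≤ enc s * 2 ^ u.length := by
      have : 2 ^ (u'.length + 1) ≤ 2 ^ u.length := Nat.pow_le_pow_right (by norm_num) (by omega)
      have : (enc s + 1) * 2 ^ u'.length ≤ enc s * 2 ^ (u'.length+1) := by
        rw [pow_succ]; nlinarith
      nlinarith [Nat.pow_le_pow_right (show 0 < 2 by norm_num) (show u'.length + 1 ≤ u.length by omega), pow_pos (show 0<2 by norm_num) u'.length]
    omega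
  · have heq : u'.length = u.length := le_antisymm hlen hge
    have : val u' < val u := by
      have h1 := enc_eq u'
      have h2 := enc_eq u
      rw [heq] at h1
      omega
    rw [heq]
    have := Nat.mul_le_mul_left (enc s) (le_refl (2 ^ u.length))
    omega

/-- key comparison: word with `[0,1]` separator and anything enc-≤ is smaller
than word with `[1,0]` separator. -/
theorem enc_key (s : List (Fin 2)) {v' u : List (Fin 2)} (h : enc v' ≤ enc u) :
    enc (s ++ ([0, 1] ++ v')) < enc (s ++ ([1, 0] ++ u)) := by
  rcases Nat.lt_or_ge (enc v') (enc u) with hlt | hge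
  · have hlen : v'.length ≤ u.length := length_le_of_enc_lt hlt
    apply Nat.lt_of_lt_of_le (enc_append_lt s (u := [1,0] ++ v') ?_) ?_
    · rw [enc_append, enc_append]
      show (2*(2*1+0)+1) * 2 ^ _ + _ < (2*(2*1+1)+0) * 2 ^ _ + _
      have := val_lt v'
      omega
    · exact le_of_lt (enc_append_lt s (by
        have : enc ([1,0] ++ v') < enc ([1,0] ++ u) := enc_append_lt [1,0] hlt
        exact this))
  · have heq : enc v' = enc u := le_antisymm h hge
    have hlen : v'.length = u.length := by
      have h1 := enc_eq v'; have h2 := enc_eq u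
      have l1 : v'.length ≤ u.length := by
        by_contra hc
        have := Nat.pow_le_pow_right (show 0<2 by norm_num) (show u.length + 1 ≤ v'.length by omega)
        have := enc_lt u; have := enc_ge v'; omega
      have l2 : u.length ≤ v'.length := by
        by_contra hc
        have := Nat.pow_le_pow_right (show 0<2 by norm_num) (show v'.length + 1 ≤ u.length by omega)
        have := enc_lt v'; have := enc_ge u; omega
      omega
    apply enc_append_lt s
    rw [enc_append, enc_append]
    show (2*(2*1+0)+1) * 2 ^ _ + _ < (2*(2*1+1)+0) * 2 ^ _ + _
    have h1 := val_lt v'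
    have h2 := enc_eq v'; have h3 := enc_eq u
    rw [hlen] at h1 h2 ⊢
    omega



abbrev I2 : Type := (ℕ × ℕ) × List (ℕ × ℕ)

def blk (p : ℕ × ℕ) : List (Fin 2) := List.replicate p.1 0 ++ List.replicate p.2 1

def Laux : (ℕ × ℕ) → List (ℕ × ℕ) → List (Fin 2)
  | h, [] => blk h
  | h, q :: t => blk h ++ 1 :: 0 :: Laux q t

def tl2 : List (ℕ × ℕ) → List (Fin 2)
  | [] => []
  | q :: t => 0 :: Laux q t

def sep : List (ℕ × ℕ) → ℕ
  | [] => 0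
  | _ :: _ => 1

theorem replicate_cancel {α : Type*} (c : α) :
    ∀ (a a' : ℕ) (u u' : List α), List.replicate a c ++ u = List.replicate a' c ++ u' →
      u.head? ≠ some c → u'.head? ≠ some c → a = a' ∧ u = u' := by
  intro a
  induction a with
  | zero =>
    intro a' u u' heq hu hu'
    cases a' with
    | zero => simpa using heq
    | succ n =>
      exfalso
      simp only [List.replicate_zero, List.nil_append, List.replicate_succ,
        List.cons_append] at heq
      rw [heq] at hu
      simp at hu
  | succ n ih =>
    intro a' u u' heq hu hu'
    cases a' with
    | zero =>
      exfalso
      simp only [List.replicate_zero, List.nil_append, List.replicate_succ,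
        List.cons_append] at heq
      rw [← heq] at hu'
      simp at hu'
    | succ m =>
      simp only [List.replicate_succ, List.cons_append, List.cons.injEq] at heq
      obtain ⟨h1, h2⟩ := ih m u u' heq.2 hu hu'
      exact ⟨by omega, h2⟩

theorem head?_replicate_append_ne {α : Type*} (c c' : α) (hcc : c ≠ c') (b : ℕ)
    (s : List α) (hs : s.head? ≠ some c') :
    (List.replicate b c ++ s).head? ≠ some c' := by
  cases b with
  | zero => simpa using hs
  | succ n => simp [List.replicate_succ, hcc]

theorem Laux_struct (a b : ℕ) (t : List (ℕ × ℕ)) :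
    Laux (a, b) t = List.replicate a 0 ++ (List.replicate (b + sep t) 1 ++ tl2 t) := by
  cases t with
  | nil => simp [Laux, blk, sep, tl2]
  | cons q t' =>
    show blk (a, b) ++ 1 :: 0 :: Laux q t' = _
    rw [blk, sep, tl2, List.replicate_add]
    simp

theorem tail1_ne (b : ℕ) (t0 : List (ℕ × ℕ)) :
    (List.replicate (b + sep t0) (1 : Fin 2) ++ tl2 t0).head? ≠ some 0 := by
  cases t0 with
  | nil =>
    apply head?_replicate_append_ne 1 0 (by decide)
    simp [tl2]
  | cons q t =>
    show (List.replicate (b + 1) (1 : Fin 2) ++ _).head? ≠ some 0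
    rw [List.replicate_succ]
    simp

theorem tail2_ne (t0 : List (ℕ × ℕ)) : (tl2 t0).head? ≠ some 1 := by
  cases t0 <;> simp [tl2]

theorem Laux_inj : ∀ (t t' : List (ℕ × ℕ)) (h h' : ℕ × ℕ),
    Laux h t = Laux h' t' → h = h' ∧ t = t' := by
  intro t
  induction t with
  | nil =>
    intro t' h h' heq
    obtain ⟨a, b⟩ := h; obtain ⟨a', b'⟩ := h'
    rw [Laux_struct, Laux_struct] at heq
    obtain ⟨ha, heq2⟩ := replicate_cancel 0 a a' _ _ heq (tail1_ne _ _) (tail1_ne _ _)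
    obtain ⟨hb, heq3⟩ := replicate_cancel 1 _ _ _ _ heq2 (tail2_ne _) (tail2_ne _)
    cases t' with
    | nil => simp [sep] at hb ⊢; omega
    | cons q t'' => simp [tl2] at heq3
  | cons q t ih =>
    intro t' h h' heq
    obtain ⟨a, b⟩ := h; obtain ⟨a', b'⟩ := h'
    rw [Laux_struct, Laux_struct] at heq
    obtain ⟨ha, heq2⟩ := replicate_cancel 0 a a' _ _ heq (tail1_ne _ _) (tail1_ne _ _)
    obtain ⟨hb, heq3⟩ := replicate_cancel 1 _ _ _ _ heq2 (tail2_ne _) (tail2_ne _)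
    cases t' with
    | nil => simp [tl2] at heq3
    | cons q' t'' =>
      simp only [tl2, List.cons.injEq] at heq3
      obtain ⟨hq, ht⟩ := ih t'' q q' heq3.2
      have hb' : b = b' := by simpa [sep] using hb
      exact ⟨by simp [ha, hb'], by rw [hq, ht]⟩

theorem exists_run {α : Type*} [DecidableEq α] (c : α) (w : List α) :
    ∃ n u, w = List.replicate n c ++ u ∧ u.head? ≠ some c := by
  induction w with
  | nil => exact ⟨0, [], by simp⟩
  | cons d w ih =>
    by_cases hd : d = c
    · obtain ⟨n, u, hw, hu⟩ := ih
      exact ⟨n + 1, u, by simp [List.replicate_succ, hd, hw], hu⟩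
    · exact ⟨0, d :: w, by simp, by simpa using hd⟩

theorem Laux_surj : ∀ (n : ℕ) (w : List (Fin 2)), w.length ≤ n →
    ∃ h t, Laux h t = w := by
  intro n
  induction n with
  | zero =>
    intro w hw
    have : w = [] := List.length_eq_zero_iff.mp (by omega)
    exact ⟨(0,0), [], by simp [this, Laux, blk]⟩
  | succ n ih =>
    intro w hw
    obtain ⟨a, w1, hw1, hu1⟩ := exists_run (0 : Fin 2) w
    obtain ⟨b, w2, hw2, hu2⟩ := exists_run (1 : Fin 2) w1
    cases hmw : w2 with
    | nil =>
      refine ⟨(a, b), [], ?_⟩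
      rw [hmw] at hw2
      show blk (a, b) = w
      rw [hw1, hw2, blk]
      simp
    | cons d w3 =>
      rw [hmw] at hw2 hu2
      have hd0 : d = 0 := by
        have h1 : d ≠ 1 := by intro hc; rw [hc] at hu2; simp at hu2
        omega
      subst hd0
      have hb : 1 ≤ b := by
        rcases Nat.eq_zero_or_pos b with h0 | h; swap; · omega
        exfalso
        rw [h0] at hw2
        simp at hw2
        rw [hw2] at hu1
        simp at hu1
      have hlen : w3.length ≤ n := by
        have e1 := congrArg List.length hw1
        have e2 := congrArg List.length hw2
        simp [List.length_append, List.length_replicate] at e1 e2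
        omega
      obtain ⟨q, t, hqt⟩ := ih w3 hlen
      refine ⟨(a, b - 1), q :: t, ?_⟩
      show blk (a, b-1) ++ 1 :: 0 :: Laux q t = w
      rw [hqt, hw1, hw2, blk]
      simp only [List.append_assoc, List.cons_append]
      congr 1
      have hrep : List.replicate b (1:Fin 2) = List.replicate (b-1) 1 ++ [1] := by
        rw [← List.replicate_succ']
        congr 1; omega
      rw [hrep]
      simp



abbrev A2 : Type := FreeAlgebra ℤ (Fin 2)

def P (w : List (Fin 2)) : A2 := (w.map (FreeAlgebra.ι ℤ)).prod

theorem P_nil : P [] = 1 := rfl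

theorem P_append (u v : List (Fin 2)) : P (u ++ v) = P u * P v := by
  simp [P, List.map_append, List.prod_append]

noncomputable def bW : Module.Basis (List (Fin 2)) ℤ A2 :=
  (FreeAlgebra.basisFreeMonoid ℤ (Fin 2)).reindex FreeMonoid.toList

theorem basisFreeMonoid_apply (m : FreeMonoid (Fin 2)) :
    FreeAlgebra.basisFreeMonoid ℤ (Fin 2) m = FreeMonoid.lift (FreeAlgebra.ι ℤ) m := by
  rw [FreeAlgebra.basisFreeMonoid, Module.Basis.map_apply, Finsupp.coe_basisSingleOne]
  change (FreeAlgebra.equivMonoidAlgebraFreeMonoid (R := ℤ) (X := Fin 2)).symm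
      (MonoidAlgebra.single m 1) = _
  rw [FreeAlgebra.equivMonoidAlgebraFreeMonoid, AlgEquiv.ofAlgHom_symm_apply,
    MonoidAlgebra.lift_single]
  exact one_smul ℤ _

theorem bW_apply (w : List (Fin 2)) : bW w = P w := by
  rw [bW]; erw [Module.Basis.reindex_apply, basisFreeMonoid_apply, FreeMonoid.lift_apply]
  rfl



def Rc : A2 := FreeAlgebra.ι ℤ 1 * FreeAlgebra.ι ℤ 0 - FreeAlgebra.ι ℤ 0 * FreeAlgebra.ι ℤ 1

theorem Rc_eq : Rc = P [1, 0] - P [0, 1] := by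
  simp [Rc, P]

def WA (h : ℕ × ℕ) (t : List (ℕ × ℕ)) : A2 :=
  P (blk h) * (t.map fun q => Rc * P (blk q)).prod

theorem WA_nil (h : ℕ × ℕ) : WA h [] = P (blk h) := by simp [WA]

theorem WA_cons (h q : ℕ × ℕ) (t : List (ℕ × ℕ)) :
    WA h (q :: t) = P (blk h) * (Rc * WA q t) := by
  simp only [WA, List.map_cons, List.prod_cons, ← mul_assoc]

def SpE (n : ℕ) : Submodule ℤ A2 := span ℤ (P '' {u | enc u < n})

theorem mul_SpE {s : List (Fin 2)} {n N : ℕ} (H : ∀ w, enc w < n → enc (s ++ w) < N)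
    {x : A2} (hx : x ∈ SpE n) : P s * x ∈ SpE N := by
  have hmem : P s * x ∈ Submodule.map (LinearMap.mulLeft ℤ (P s)) (SpE n) :=
    ⟨x, hx, rfl⟩
  rw [SpE, Submodule.map_span] at hmem
  refine span_le.mpr ?_ hmem
  rintro _ ⟨_, ⟨u, hu, rfl⟩, rfl⟩
  exact subset_span ⟨s ++ u, H u hu, by rw [P_append]; rfl⟩

theorem SpE_mono {n n' : ℕ} (h : n ≤ n') : SpE n ≤ SpE n' :=
  span_mono (Set.image_mono fun u hu => lt_of_lt_of_le hu h)

theorem WA_tri : ∀ (t : List (ℕ × ℕ)) (h : ℕ × ℕ),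
    WA h t - P (Laux h t) ∈ SpE (enc (Laux h t)) := by
  intro t
  induction t with
  | nil =>
    intro h
    rw [WA_nil]
    show P (blk h) - P (Laux h []) ∈ _
    rw [show Laux h [] = blk h from rfl, sub_self]
    exact zero_mem _
  | cons q t ih =>
    intro h
    have hL : Laux h (q :: t) = blk h ++ ([1, 0] ++ Laux q t) := rfl
    set u := Laux q t with hu
    set N := enc (Laux h (q :: t)) with hN
    have hT1 : P (blk h ++ [1, 0]) * (WA q t - P u) ∈ SpE N := by
      apply mul_SpE (n := enc u) ?_ (ih q)
      intro w hw
      rw [List.append_assoc, hN, hL]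
      exact enc_append_lt (blk h) (enc_append_lt [1, 0] hw)
    have hT2 : P (blk h ++ ([0, 1] ++ u)) ∈ SpE N := by
      apply subset_span
      exact ⟨_, by rw [hN, hL]; exact enc_key (blk h) (le_refl (enc u)), rfl⟩
    have hT3 : P (blk h ++ [0, 1]) * (WA q t - P u) ∈ SpE N := by
      apply mul_SpE (n := enc u) ?_ (ih q)
      intro w hw
      rw [List.append_assoc, hN, hL]
      exact enc_key (blk h) (le_of_lt hw)
    have hsum : WA h (q :: t) - P (Laux h (q :: t))
        = P (blk h ++ [1, 0]) * (WA q t - P u) - P (blk h ++ ([0, 1] ++ u))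
          - P (blk h ++ [0, 1]) * (WA q t - P u) := by
      rw [WA_cons, Rc_eq, hL]
      simp only [P_append]
      noncomm_ring
    rw [hsum]
    exact sub_mem (sub_mem hT1 hT2) hT3

noncomputable def eL : I2 ≃ List (Fin 2) :=
  Equiv.ofBijective (fun i => Laux i.1 i.2)
    ⟨fun i j hij => by
      obtain ⟨h1, h2⟩ := Laux_inj i.2 j.2 i.1 j.1 hij
      exact Prod.ext h1 h2,
     fun w => by
      obtain ⟨h, t, ht⟩ := Laux_surj w.length w (le_refl _)
      exact ⟨(h, t), ht⟩⟩

theorem exists_B1 : ∃ B : Module.Basis I2 ℤ A2, ∀ i : I2, B i = WA i.1 i.2 := by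
  apply triangular_basis bW eL enc (fun i => WA i.1 i.2)
  intro i
  have himg : ∀ (n : ℕ), ⇑bW '' {w | enc w < n} = P '' {w | enc w < n} :=
    fun n => Set.image_congr fun w _ => bW_apply w
  have heL : eL i = Laux i.1 i.2 := rfl
  rw [heL, himg, bW_apply]
  exact WA_tri i.2 i.1


noncomputable def B1 : Module.Basis I2 ℤ A2 := exists_B1.choose

theorem B1_spec : ∀ i : I2, B1 i = WA i.1 i.2 := exists_B1.choose_spec

/-! ### Fin 3 words -/

def g3 : Fin 3 → A2 := ![FreeAlgebra.ι ℤ 0, FreeAlgebra.ι ℤ 1, Rc]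

def P3 (w : List (Fin 3)) : A2 := (w.map g3).prod

theorem P3_nil : P3 [] = 1 := rfl

theorem P3_append (u v : List (Fin 3)) : P3 (u ++ v) = P3 u * P3 v := by
  simp [P3, List.map_append, List.prod_append]

theorem P3_cons (a : Fin 3) (w : List (Fin 3)) : P3 (a :: w) = g3 a * P3 w := by
  simp [P3]

def wt3 : Fin 3 → ℕ := ![1, 1, 2]

def deg3 (w : List (Fin 3)) : ℕ := (w.map wt3).sum

def rc3 (w : List (Fin 3)) : ℕ := w.count 2

def inv3 : List (Fin 3) → ℕ
  | [] => 0
  | a :: w => inv3 w + if a = 1 then w.count 0 else 0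

theorem deg3_append (u v : List (Fin 3)) : deg3 (u ++ v) = deg3 u + deg3 v := by
  simp [deg3]

theorem deg3_cons (a : Fin 3) (w : List (Fin 3)) : deg3 (a :: w) = wt3 a + deg3 w := by
  simp [deg3]

theorem rc3_append (u v : List (Fin 3)) : rc3 (u ++ v) = rc3 u + rc3 v := by
  simp [rc3, List.count_append]

theorem deg3_eq (w : List (Fin 3)) :
    deg3 w = w.count 0 + w.count 1 + 2 * w.count 2 := by
  induction w with
  | nil => simp [deg3]
  | cons a w ih =>
    rw [deg3_cons]
    fin_cases a <;> simp [List.count_cons, wt3, ih] <;> omega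

theorem length_le_deg3 (w : List (Fin 3)) : w.length ≤ deg3 w := by
  induction w with
  | nil => simp [deg3]
  | cons a w ih =>
    rw [deg3_cons]
    have : 1 ≤ wt3 a := by fin_cases a <;> simp [wt3]
    simp only [List.length_cons]
    omega

theorem inv3_le (w : List (Fin 3)) : inv3 w ≤ w.length * w.length := by
  induction w with
  | nil => simp [inv3]
  | cons a w ih =>
    have hc : w.count 0 ≤ w.length := List.count_le_length
    have : inv3 (a :: w) ≤ inv3 w + w.count 0 := by
      rw [inv3]; split <;> omega
    simp only [List.length_cons]
    nlinarith

theorem inv3_append (u v : List (Fin 3)) :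
    inv3 (u ++ v) = inv3 u + inv3 v + u.count 1 * v.count 0 := by
  induction u with
  | nil => simp [inv3]
  | cons a u ih =>
    have h1 : inv3 (a :: u ++ v) = inv3 (u ++ v) + (if a = 1 then (u ++ v).count 0 else 0) := rfl
    have h2 : inv3 (a :: u) = inv3 u + (if a = 1 then u.count 0 else 0) := rfl
    rw [h1, h2, ih, List.count_append]
    by_cases ha : a = 1 <;> simp [ha, List.count_cons] <;> ring

/-! ### block words -/

def blk3 (p : ℕ × ℕ) : List (Fin 3) :=
  List.replicate p.1 0 ++ List.replicate p.2 1

def w3 : (ℕ × ℕ) → List (ℕ × ℕ) → List (Fin 3)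
  | h, [] => blk3 h
  | h, q :: t => blk3 h ++ 2 :: w3 q t

theorem P3_replicate0 (n : ℕ) : P3 (List.replicate n 0) = FreeAlgebra.ι ℤ 0 ^ n := by
  simp [P3, List.map_replicate, List.prod_replicate, g3]

theorem P3_replicate1 (n : ℕ) : P3 (List.replicate n 1) = FreeAlgebra.ι ℤ 1 ^ n := by
  simp [P3, List.map_replicate, List.prod_replicate, g3]

theorem P3_blk3 (p : ℕ × ℕ) : P3 (blk3 p) = P (blk p) := by
  rw [blk3, blk, P3_append, P_append, P3_replicate0, P3_replicate1]
  simp [P, List.map_replicate, List.prod_replicate]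

theorem g3_two : g3 2 = Rc := rfl

theorem P3_w3 : ∀ (t : List (ℕ × ℕ)) (h : ℕ × ℕ), P3 (w3 h t) = WA h t := by
  intro t
  induction t with
  | nil => intro h; rw [show w3 h [] = blk3 h from rfl, P3_blk3, WA_nil]
  | cons q t ih =>
    intro h
    show P3 (blk3 h ++ 2 :: w3 q t) = _
    rw [P3_append, P3_cons, ih, P3_blk3, g3_two, WA_cons]

theorem rc3_blk3 (p : ℕ × ℕ) : rc3 (blk3 p) = 0 := by
  simp [blk3, rc3, List.count_append, List.count_replicate]

theorem deg3_blk3 (p : ℕ × ℕ) : deg3 (blk3 p) = p.1 + p.2 := by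
  simp [blk3, deg3_append, deg3, List.map_replicate, List.sum_replicate, wt3, mul_comm]

theorem rc3_w3 : ∀ (t : List (ℕ × ℕ)) (h : ℕ × ℕ), rc3 (w3 h t) = t.length := by
  intro t
  induction t with
  | nil => intro h; exact rc3_blk3 h
  | cons q t ih =>
    intro h
    show rc3 (blk3 h ++ 2 :: w3 q t) = _
    rw [rc3_append, rc3_blk3, rc3, List.count_cons, ← rc3, ih q]
    simp

theorem deg3_w3_cons (h q : ℕ × ℕ) (t : List (ℕ × ℕ)) :
    deg3 (w3 h (q :: t)) = (h.1 + h.2) + 2 + deg3 (w3 q t) := by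
  show deg3 (blk3 h ++ 2 :: w3 q t) = _
  rw [deg3_append, deg3_cons, deg3_blk3]
  show _ + (wt3 2 + _) = _
  simp [wt3]; omega

theorem two_rc_le_deg3_w3 : ∀ (t : List (ℕ × ℕ)) (h : ℕ × ℕ),
    2 * t.length ≤ deg3 (w3 h t) := by
  intro t
  induction t with
  | nil => intro h; simp
  | cons q t ih =>
    intro h
    rw [deg3_w3_cons]
    have := ih q
    simp only [List.length_cons]
    omega

/-! ### reduction -/

def SpB (D c : ℕ) : Submodule ℤ A2 :=
  span ℤ (B1 '' {i : I2 | deg3 (w3 i.1 i.2) = D ∧ c ≤ i.2.length})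

theorem SpB_mono {D c c' : ℕ} (h : c ≤ c') : SpB D c' ≤ SpB D c :=
  span_mono (Set.image_mono fun i hi => ⟨hi.1, le_trans h hi.2⟩)

def μ3 (w : List (Fin 3)) : ℕ :=
  (deg3 w - 2 * rc3 w) * (deg3 w + 1) ^ 2 + inv3 w

/-- decomposition: either there is an adjacent `[1,0]`, or the word is a block word. -/
theorem decomp3 : ∀ (n : ℕ) (w : List (Fin 3)), w.length ≤ n →
    (∃ u v, w = u ++ 1 :: 0 :: v) ∨ (∃ h t, w3 h t = w) := by
  intro n
  induction n with
  | zero =>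
    intro w hw
    right
    have : w = [] := List.length_eq_zero_iff.mp (by omega)
    exact ⟨(0,0), [], by simp [this, w3, blk3]⟩
  | succ n ih =>
    intro w hw
    obtain ⟨a, w1, hw1, hu1⟩ := exists_run (0 : Fin 3) w
    obtain ⟨b, w2, hw2, hu2⟩ := exists_run (1 : Fin 3) w1
    cases hmw : w2 with
    | nil =>
      right
      rw [hmw] at hw2
      refine ⟨(a, b), [], ?_⟩
      show blk3 (a, b) = w
      rw [hw1, hw2, blk3]
      simp
    | cons d w3' =>
      rw [hmw] at hw2 hu2
      have hd : d = 0 ∨ d = 2 := by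
        have h1 : d ≠ 1 := by intro hc; rw [hc] at hu2; simp at hu2
        omega
      rcases hd with hd | hd
      · -- d = 0 : found a [1,0] since b ≥ 1
        subst hd
        left
        have hb : 1 ≤ b := by
          rcases Nat.eq_zero_or_pos b with h0 | h; swap; · omega
          exfalso
          rw [h0] at hw2
          simp at hw2
          rw [hw2] at hu1
          simp at hu1
        refine ⟨List.replicate a 0 ++ List.replicate (b-1) 1, w3', ?_⟩
        rw [hw1, hw2]
        have hrep : List.replicate b (1:Fin 3) = List.replicate (b-1) 1 ++ [1] := by
          rw [← List.replicate_succ']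
          congr 1; omega
        rw [hrep]
        simp
      · -- d = 2 : recurse
        subst hd
        have hlen : w3'.length ≤ n := by
          have e1 := congrArg List.length hw1
          have e2 := congrArg List.length hw2
          simp [List.length_append, List.length_replicate] at e1 e2
          omega
        rcases ih w3' hlen with ⟨u, v, huv⟩ | ⟨h, t, hht⟩
        · left
          refine ⟨List.replicate a 0 ++ List.replicate b 1 ++ 2 :: u, v, ?_⟩
          rw [hw1, hw2, huv]
          simp
        · right
          refine ⟨(a, b), h :: t, ?_⟩
          show blk3 (a, b) ++ 2 :: w3 h t = w
          rw [hht, hw1, hw2, blk3]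
          simp

theorem yx_eq : g3 1 * g3 0 = g3 0 * g3 1 + g3 2 := by
  show FreeAlgebra.ι ℤ 1 * FreeAlgebra.ι ℤ 0 = FreeAlgebra.ι ℤ 0 * FreeAlgebra.ι ℤ 1 + Rc
  rw [Rc]; noncomm_ring

theorem P3_swap (u v : List (Fin 3)) :
    P3 (u ++ 1 :: 0 :: v) = P3 (u ++ 0 :: 1 :: v) + P3 (u ++ 2 :: v) := by
  rw [show (1 : Fin 3) :: 0 :: v = [1, 0] ++ v from rfl,
      show (0 : Fin 3) :: 1 :: v = [0, 1] ++ v from rfl,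
      show (2 : Fin 3) :: v = [2] ++ v from rfl]
  rw [← List.append_assoc, ← List.append_assoc, ← List.append_assoc]
  rw [P3_append, P3_append, P3_append, P3_append, P3_append, P3_append]
  have h10 : P3 [1, 0] = g3 1 * g3 0 := by simp [P3]
  have h01 : P3 [0, 1] = g3 0 * g3 1 := by simp [P3]
  have h2 : P3 [2] = g3 2 := by simp [P3]
  rw [h10, h01, h2, yx_eq]
  noncomm_ring

theorem main_red : ∀ (n : ℕ) (w : List (Fin 3)), μ3 w < n →
    P3 w ∈ SpB (deg3 w) (rc3 w) := by
  intro n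
  induction n with
  | zero => intro w hw; omega
  | succ n ih =>
    intro w hw
    rcases decomp3 w.length w (le_refl _) with ⟨u, v, rfl⟩ | ⟨h, t, rfl⟩
    · -- reduction case
      set w1 := u ++ 0 :: 1 :: v with hw1
      set w2 := u ++ (2:Fin 3) :: v with hw2
      have hdeg1 : deg3 w1 = deg3 (u ++ 1 :: 0 :: v) := by
        rw [hw1, deg3_append, deg3_append, deg3_cons, deg3_cons, deg3_cons, deg3_cons]
        simp [wt3]
      have hdeg2 : deg3 w2 = deg3 (u ++ 1 :: 0 :: v) := by
        rw [hw2, deg3_append, deg3_append, deg3_cons, deg3_cons, deg3_cons]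
        simp [wt3]; omega
      have hrc1 : rc3 w1 = rc3 (u ++ 1 :: 0 :: v) := by
        rw [hw1, rc3, rc3, List.count_append, List.count_append,
          List.count_cons, List.count_cons, List.count_cons, List.count_cons]
        simp
      have hrc2 : rc3 w2 = rc3 (u ++ 1 :: 0 :: v) + 1 := by
        rw [hw2, rc3, rc3, List.count_append, List.count_append,
          List.count_cons, List.count_cons, List.count_cons]
        simp
        omega
      have hinv1 : inv3 w1 + 1 = inv3 (u ++ 1 :: 0 :: v) := by
        rw [hw1, inv3_append, inv3_append]
        have e1 : inv3 ((1:Fin 3) :: 0 :: v) = inv3 v + (v.count 0 + 1) := by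
          simp [inv3, List.count_cons]
        have e2 : inv3 ((0:Fin 3) :: 1 :: v) = inv3 v + v.count 0 := by
          simp [inv3]
        have e3 : ((1:Fin 3) :: 0 :: v).count 0 = v.count 0 + 1 := by
          rw [List.count_cons, List.count_cons]; simp
        have e4 : ((0:Fin 3) :: 1 :: v).count 0 = v.count 0 + 1 := by
          rw [List.count_cons, List.count_cons]; simp
        rw [e1, e2, e3, e4]
        ring
      -- μ3 decreases
      set D := deg3 (u ++ 1 :: 0 :: v) with hD
      set rc := rc3 (u ++ 1 :: 0 :: v) with hrc
      have hDrc : D = (u ++ 1 :: 0 :: v).count 0 + (u ++ 1 :: 0 :: v).count 1 + 2 * rc := by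
        rw [hD, hrc, deg3_eq, rc3]
      have hc0 : 1 ≤ (u ++ 1 :: 0 :: v).count 0 := by
        rw [List.count_append, List.count_cons, List.count_cons]; simp; omega
      have hc1 : 1 ≤ (u ++ 1 :: 0 :: v).count 1 := by
        rw [List.count_append, List.count_cons]; simp; omega
      have hD2 : 2 * rc + 2 ≤ D := by omega
      have hμ1 : μ3 w1 < μ3 (u ++ 1 :: 0 :: v) := by
        rw [μ3, μ3, hdeg1, hrc1, ← hD, ← hrc]
        omega
      have hμ2 : μ3 w2 < μ3 (u ++ 1 :: 0 :: v) := by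
        rw [μ3, μ3, hdeg2, hrc2, ← hD, ← hrc]
        have hlen2 : w2.length ≤ D := by
          rw [← hdeg2]; exact length_le_deg3 w2
        have hinvlt : inv3 w2 < (D + 1) ^ 2 := by
          have := inv3_le w2
          have h1 : w2.length * w2.length ≤ D * D := Nat.mul_le_mul hlen2 hlen2
          have h2 : D * D < (D + 1) ^ 2 := by nlinarith
          omega
        have e1 : D - 2 * (rc + 1) = (D - 2 * rc) - 2 := by omega
        rw [e1]
        set X := D - 2 * rc with hX
        have hX2 : 2 ≤ X := by omega
        set K := (D + 1) ^ 2 with hK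
        have : (X - 2) * K + K = (X - 1) * K := by
          have : X - 2 + 1 = X - 1 := by omega
          rw [← this]; ring
        nlinarith [Nat.mul_le_mul_right K (show X - 1 ≤ X by omega)]
      have m1 := ih w1 (by omega)
      have m2 := ih w2 (by omega)
      rw [hdeg1, hrc1] at m1
      rw [hdeg2, hrc2] at m2
      have m2' : P3 w2 ∈ SpB D rc := SpB_mono (by omega) m2
      rw [P3_swap]
      exact add_mem m1 m2'
    · -- normal form case
      refine subset_span ⟨(h, t), ⟨rfl, ?_⟩, ?_⟩
      · rw [rc3_w3]
      · rw [B1_spec, P3_w3]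


/-! ### the r-filtration spans -/

def SpW (d c : ℕ) : Submodule ℤ A2 :=
  span ℤ (P3 '' {w | deg3 w = d ∧ c ≤ rc3 w})

theorem SpW_mono {d c c' : ℕ} (h : c ≤ c') : SpW d c' ≤ SpW d c :=
  span_mono (Set.image_mono fun w hw => ⟨hw.1, le_trans h hw.2⟩)

theorem spw_congr {d c d' c' : ℕ} {x : A2} (hd : d = d') (hc : c = c')
    (hx : x ∈ SpW d c) : x ∈ SpW d' c' := by subst hd; subst hc; exact hx

theorem mem_SpW_single {w : List (Fin 3)} {d c : ℕ} (hd : deg3 w = d) (hc : c ≤ rc3 w) :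
    P3 w ∈ SpW d c := subset_span ⟨w, ⟨hd, hc⟩, rfl⟩

theorem mulW {d c d' c' : ℕ} {x y : A2} (hx : x ∈ SpW d c) (hy : y ∈ SpW d' c') :
    x * y ∈ SpW (d + d') (c + c') := by
  have hmem := Submodule.mul_mem_mul hx hy
  erw [SpW, SpW, Submodule.span_mul_span ℤ] at hmem
  refine span_le.mpr ?_ hmem
  rintro _ ⟨_, ⟨w, hw, rfl⟩, _, ⟨w', hw', rfl⟩, rfl⟩
  refine subset_span ⟨w ++ w', ⟨?_, ?_⟩, by rw [P3_append]⟩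
  · rw [deg3_append, hw.1, hw'.1]
  · rw [rc3_append]
    have := hw.2; have := hw'.2
    omega

def xg : A2 := FreeAlgebra.ι ℤ 0
def yg : A2 := FreeAlgebra.ι ℤ 1

theorem deg3_replicate0 (n : ℕ) : deg3 (List.replicate n 0) = n := by
  simp [deg3, List.map_replicate, List.sum_replicate, wt3, smul_eq_mul]

theorem deg3_replicate1 (n : ℕ) : deg3 (List.replicate n 1) = n := by
  simp [deg3, List.map_replicate, List.sum_replicate, wt3, smul_eq_mul]

theorem xg_pow_mem (n : ℕ) : xg ^ n ∈ SpW n 0 := by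
  rw [show xg ^ n = P3 (List.replicate n 0) from (P3_replicate0 n).symm]
  exact mem_SpW_single (deg3_replicate0 n) (Nat.zero_le _)

theorem yg_pow_mem (n : ℕ) : yg ^ n ∈ SpW n 0 := by
  rw [show yg ^ n = P3 (List.replicate n 1) from (P3_replicate1 n).symm]
  exact mem_SpW_single (deg3_replicate1 n) (Nat.zero_le _)

theorem xg_mem : xg ∈ SpW 1 0 := by
  have := xg_pow_mem 1
  rwa [pow_one] at this

theorem xy_mem : xg * yg ∈ SpW 2 0 := by
  have := mulW xg_mem (by have := yg_pow_mem 1; rwa [pow_one] at this)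
  exact this

theorem Rc_mem : Rc ∈ SpW 2 1 := by
  rw [show Rc = P3 [2] by simp [P3, g3_two]]
  exact mem_SpW_single (by simp [deg3, wt3]) (by simp [rc3])

theorem Rc_eq' : Rc = yg * xg - xg * yg := rfl

theorem comm_pow : ∀ n : ℕ, yg * xg ^ n - xg ^ n * yg ∈ SpW (n + 1) 1 := by
  intro n
  induction n with
  | zero => simp
  | succ n ih =>
    have hid : yg * xg ^ (n+1) - xg ^ (n+1) * yg
        = xg * (yg * xg ^ n - xg ^ n * yg) + Rc * xg ^ n := by
      rw [pow_succ' xg n, Rc_eq']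
      noncomm_ring
    rw [hid]
    refine add_mem ?_ ?_
    · exact spw_congr (by omega) (by omega) (mulW xg_mem ih)
    · exact spw_congr (by omega) (by omega) (mulW Rc_mem (xg_pow_mem n))

def zz (a b : ℕ) : A2 :=
  if b ≤ a then (xg * yg) ^ b * xg ^ (a - b) else (yg * xg) ^ a * yg ^ (b - a)

theorem blk3_P3 (a b : ℕ) : P3 (blk3 (a, b)) = xg ^ a * yg ^ b := by
  rw [blk3, P3_append, P3_replicate0, P3_replicate1]; rfl

theorem zz_le : ∀ (b a : ℕ), b ≤ a →
    (xg * yg) ^ b * xg ^ (a - b) - xg ^ a * yg ^ b ∈ SpW (a + b) 1 := by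
  intro b
  induction b with
  | zero => intro a _; simp
  | succ b ih =>
    intro a hba
    set a' := a - 1 with ha'
    have IH := ih a' (by omega)
    have hc := comm_pow a'
    have h1 : (xg * yg) ^ (b+1) * xg ^ (a - (b+1)) = (xg * yg) * ((xg * yg) ^ b * xg ^ (a' - b)) := by
      rw [pow_succ' (xg * yg) b, mul_assoc]
      congr 3
      omega
    have hid : (xg * yg) * ((xg * yg) ^ b * xg ^ (a' - b)) - xg ^ a * yg ^ (b+1)
        = xg * (yg * xg ^ a' - xg ^ a' * yg) * yg ^ b
          + (xg * yg) * ((xg * yg) ^ b * xg ^ (a' - b) - xg ^ a' * yg ^ b) := by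
      rw [show xg ^ a = xg * xg ^ a' by rw [← pow_succ']; congr 1; omega,
          pow_succ' yg b]
      noncomm_ring
    rw [h1, hid]
    refine add_mem ?_ ?_
    · exact spw_congr (by omega) (by omega) (mulW (mulW xg_mem hc) (yg_pow_mem b))
    · exact spw_congr (by omega) (by omega) (mulW xy_mem IH)

theorem zz_gt : ∀ (a b : ℕ), a < b →
    (yg * xg) ^ a * yg ^ (b - a) - xg ^ a * yg ^ b ∈ SpW (a + b) 1 := by
  intro a
  induction a with
  | zero => intro b _; simp
  | succ a ih =>
    intro b hab
    set b' := b - 1 with hb'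
    have IH := ih b' (by omega)
    have hc := comm_pow a
    have h1 : (yg * xg) ^ (a+1) * yg ^ (b - (a+1)) = (yg * xg) * ((yg * xg) ^ a * yg ^ (b' - a)) := by
      rw [pow_succ' (yg * xg) a, mul_assoc]
      congr 3
      omega
    have hid : (yg * xg) * ((yg * xg) ^ a * yg ^ (b' - a)) - xg ^ (a+1) * yg ^ b
        = xg * (yg * xg ^ a - xg ^ a * yg) * yg ^ b'
          + (xg * yg) * ((yg * xg) ^ a * yg ^ (b' - a) - xg ^ a * yg ^ b')
          + Rc * (xg ^ a * yg ^ b')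
          + Rc * ((yg * xg) ^ a * yg ^ (b' - a) - xg ^ a * yg ^ b') := by
      rw [show yg ^ b = yg * yg ^ b' by rw [← pow_succ']; congr 1; omega,
          pow_succ' xg a, Rc_eq']
      noncomm_ring
    rw [h1, hid]
    refine add_mem (add_mem (add_mem ?_ ?_) ?_) ?_
    · exact spw_congr (by omega) (by omega) (mulW (mulW xg_mem hc) (yg_pow_mem b'))
    · exact spw_congr (by omega) (by omega) (mulW xy_mem IH)
    · exact spw_congr (by omega) (by omega) (mulW Rc_mem (mulW (xg_pow_mem a) (yg_pow_mem b')))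
    · exact SpW_mono (by omega) (spw_congr (by omega) rfl (mulW Rc_mem IH))

theorem zz_tri (a b : ℕ) : zz a b - xg ^ a * yg ^ b ∈ SpW (a + b) 1 := by
  rw [zz]
  split
  · exact zz_le b a (by assumption)
  · exact zz_gt a b (by omega)

/-! ### the z-family -/

def vA (h : ℕ × ℕ) (t : List (ℕ × ℕ)) : A2 :=
  zz h.1 h.2 * (t.map fun q => Rc * zz q.1 q.2).prod

theorem vA_nil (h : ℕ × ℕ) : vA h [] = zz h.1 h.2 := by simp [vA]

theorem vA_cons (h q : ℕ × ℕ) (t : List (ℕ × ℕ)) :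
    vA h (q :: t) = zz h.1 h.2 * (Rc * vA q t) := by
  simp only [vA, List.map_cons, List.prod_cons, ← mul_assoc]

theorem WA_mem (h : ℕ × ℕ) (t : List (ℕ × ℕ)) :
    WA h t ∈ SpW (deg3 (w3 h t)) t.length := by
  rw [← P3_w3]
  exact mem_SpW_single rfl (by rw [rc3_w3])

theorem P3_blk3_mem (h : ℕ × ℕ) : P3 (blk3 h) ∈ SpW (h.1 + h.2) 0 :=
  mem_SpW_single (deg3_blk3 h) (Nat.zero_le _)

theorem vA_tri : ∀ (t : List (ℕ × ℕ)) (h : ℕ × ℕ),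
    vA h t - WA h t ∈ SpW (deg3 (w3 h t)) (t.length + 1) := by
  intro t
  induction t with
  | nil =>
    intro h
    rw [vA_nil, WA_nil, ← P3_blk3, blk3_P3]
    have := zz_tri h.1 h.2
    exact spw_congr (by rw [show w3 h [] = blk3 h from rfl, deg3_blk3]) rfl this
  | cons q t ih =>
    intro h
    have hW : WA h (q :: t) = P3 (blk3 h) * (Rc * WA q t) := by
      rw [WA_cons, P3_blk3]
    have hid : vA h (q :: t) - WA h (q :: t)
        = P3 (blk3 h) * (Rc * (vA q t - WA q t))
          + (zz h.1 h.2 - P3 (blk3 h)) * (Rc * WA q t)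
          + (zz h.1 h.2 - P3 (blk3 h)) * (Rc * (vA q t - WA q t)) := by
      rw [vA_cons, hW]
      noncomm_ring
    rw [hid]
    have hzz : zz h.1 h.2 - P3 (blk3 h) ∈ SpW (h.1 + h.2) 1 := by
      rw [blk3_P3]
      exact zz_tri h.1 h.2
    have hD : deg3 (w3 h (q :: t)) = (h.1 + h.2) + 2 + deg3 (w3 q t) := deg3_w3_cons h q t
    refine add_mem (add_mem ?_ ?_) ?_
    · exact spw_congr (by omega) (by simp only [List.length_cons]; omega)
        (mulW (P3_blk3_mem h) (mulW Rc_mem (ih q)))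
    · exact spw_congr (by omega) (by simp only [List.length_cons]; omega)
        (mulW hzz (mulW Rc_mem (WA_mem q t)))
    · refine SpW_mono (by simp only [List.length_cons]; omega)
        (spw_congr (by omega) rfl (mulW hzz (mulW Rc_mem (ih q))))

theorem SpW_le_SpB (d c : ℕ) : SpW d c ≤ SpB d c := by
  refine span_le.mpr ?_
  rintro _ ⟨w, ⟨hd, hc⟩, rfl⟩
  have := main_red (μ3 w + 1) w (Nat.lt_succ_self _)
  rw [hd] at this
  exact SpB_mono hc this

theorem exists_B2 : ∃ B : Module.Basis I2 ℤ A2, ∀ i : I2, B i = vA i.1 i.2 := by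
  apply triangular_basis B1 (Equiv.refl I2)
    (fun i => deg3 (w3 i.1 i.2) - 2 * i.2.length) (fun i => vA i.1 i.2)
  intro i
  rw [Equiv.refl_apply, B1_spec]
  have h1 := vA_tri i.2 i.1
  have h2 := SpW_le_SpB (deg3 (w3 i.1 i.2)) (i.2.length + 1) h1
  refine span_mono ?_ h2
  refine Set.image_mono ?_
  rintro j ⟨hdj, hcj⟩
  simp only [Set.mem_setOf_eq, Equiv.refl_apply]
  have hji := two_rc_le_deg3_w3 j.2 j.1
  have hii := two_rc_le_deg3_w3 i.2 i.1
  omega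


/-! ### the isomorphism `Alg ≃ₐ A2` -/

noncomputable def φF : F3 →ₐ[ℤ] A2 := FreeAlgebra.lift ℤ g3

theorem φF_ι (j : Fin 3) : φF (FreeAlgebra.ι ℤ j) = g3 j := by
  rw [φF, FreeAlgebra.lift_ι_apply]

theorem g3_zero : g3 0 = xg := rfl
theorem g3_one : g3 1 = yg := rfl

theorem φF_rel : ∀ ⦃a b : F3⦄, relA a b → φF a = φF b := by
  rintro a b ⟨rfl, rfl⟩
  rw [map_zero, xF, yF, rF]
  simp only [map_add, map_sub, map_mul, φF_ι, g3_zero, g3_one, g3_two, Rc_eq']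
  noncomm_ring

noncomputable def ΦA : Alg →ₐ[ℤ] A2 := RingQuot.liftAlgHom ℤ ⟨φF, φF_rel⟩

theorem ΦA_mk (x : F3) : ΦA (πA x) = φF x := by
  have hcoe : πA x = RingQuot.mkAlgHom ℤ relA x := by
    rw [πA, ← RingQuot.mkAlgHom_coe ℤ relA]
    rfl
  rw [hcoe, ΦA]
  exact RingQuot.liftAlgHom_mkAlgHom_apply ℤ φF φF_rel x

theorem ΦA_x : ΦA xA = xg := by rw [xA, ΦA_mk, xF, φF_ι, g3_zero]
theorem ΦA_y : ΦA yA = yg := by rw [yA, ΦA_mk, yF, φF_ι, g3_one]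
theorem ΦA_r : ΦA rA = Rc := by rw [rA, ΦA_mk, rF, φF_ι, g3_two]

noncomputable def ΨA : A2 →ₐ[ℤ] Alg := FreeAlgebra.lift ℤ ![xA, yA]

theorem ΨA_x : ΨA xg = xA := by
  rw [ΨA, xg, FreeAlgebra.lift_ι_apply]
  rfl

theorem ΨA_y : ΨA yg = yA := by
  rw [ΨA, yg, FreeAlgebra.lift_ι_apply]
  rfl

theorem relAlg : xA * yA - yA * xA + rA = 0 := by
  have h := RingQuot.mkRingHom_rel (r := relA) ⟨rfl, rfl⟩
  have h2 : πA (xF * yF - yF * xF + rF) = πA 0 := h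
  rw [map_add, map_sub, map_mul, map_mul, map_zero] at h2
  exact h2

theorem ΨA_Rc : ΨA Rc = rA := by
  rw [Rc_eq', map_sub, map_mul, map_mul, ΨA_x, ΨA_y]
  have h3 : rA = -(xA * yA - yA * xA) := eq_neg_of_add_eq_zero_right relAlg
  rw [h3, neg_sub]

theorem comp1 : ΦA.comp ΨA = AlgHom.id ℤ A2 := by
  apply FreeAlgebra.hom_ext
  funext j
  fin_cases j
  · show ΦA (ΨA (FreeAlgebra.ι ℤ 0)) = FreeAlgebra.ι ℤ 0
    rw [show FreeAlgebra.ι ℤ (0 : Fin 2) = xg from rfl, ΨA_x, ΦA_x]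
  · show ΦA (ΨA (FreeAlgebra.ι ℤ 1)) = FreeAlgebra.ι ℤ 1
    rw [show FreeAlgebra.ι ℤ (1 : Fin 2) = yg from rfl, ΨA_y, ΦA_y]

theorem comp2 : ΨA.comp ΦA = AlgHom.id ℤ Alg := by
  apply RingQuot.ringQuot_ext'
  apply FreeAlgebra.hom_ext
  funext j
  have hmk : ∀ x : F3, RingQuot.mkAlgHom ℤ relA x = πA x := by
    intro x
    rw [πA, ← RingQuot.mkAlgHom_coe ℤ relA]
    rfl
  fin_cases j
  · show ΨA (ΦA (RingQuot.mkAlgHom ℤ relA (FreeAlgebra.ι ℤ 0)))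
        = RingQuot.mkAlgHom ℤ relA (FreeAlgebra.ι ℤ 0)
    rw [hmk, show FreeAlgebra.ι ℤ (0 : Fin 3) = xF from rfl, ← xA, ΦA_x, ΨA_x]
  · show ΨA (ΦA (RingQuot.mkAlgHom ℤ relA (FreeAlgebra.ι ℤ 1)))
        = RingQuot.mkAlgHom ℤ relA (FreeAlgebra.ι ℤ 1)
    rw [hmk, show FreeAlgebra.ι ℤ (1 : Fin 3) = yF from rfl, ← yA, ΦA_y, ΨA_y]
  · show ΨA (ΦA (RingQuot.mkAlgHom ℤ relA (FreeAlgebra.ι ℤ 2)))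
        = RingQuot.mkAlgHom ℤ relA (FreeAlgebra.ι ℤ 2)
    rw [hmk, show FreeAlgebra.ι ℤ (2 : Fin 3) = rF from rfl, ← rA, ΦA_r, ΨA_Rc]

noncomputable def eA : Alg ≃ₐ[ℤ] A2 := AlgEquiv.ofAlgHom ΦA ΨA comp1 comp2

theorem eA_apply (x : Alg) : eA x = ΦA x := rfl

theorem ΦA_z (a b : ℕ) : ΦA (z a b) = zz a b := by
  rw [z, zz, apply_ite ΦA]
  congr 1
  · rw [map_mul, map_pow, map_pow, map_mul, ΦA_x, ΦA_y]
  · rw [map_mul, map_pow, map_pow, map_mul, ΦA_x, ΦA_y]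

theorem ΦA_target (h : ℕ × ℕ) (t : List (ℕ × ℕ)) :
    ΦA (z h.1 h.2 * (t.map fun q => rA * z q.1 q.2).prod) = vA h t := by
  rw [map_mul, ΦA_z, map_list_prod, List.map_map, vA]
  congr 2
  apply List.map_congr_left
  intro q _
  show ΦA (rA * z q.1 q.2) = _
  rw [map_mul, ΦA_r, ΦA_z]

theorem final : ∃ B : Module.Basis I2 ℤ Alg,
    ∀ (h : ℕ × ℕ) (t : List (ℕ × ℕ)),
      B (h, t) = z h.1 h.2 * (t.map fun q => rA * z q.1 q.2).prod := by
  obtain ⟨B2, hB2⟩ := exists_B2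
  refine ⟨B2.map eA.symm.toLinearEquiv, ?_⟩
  intro h t
  erw [Module.Basis.map_apply, hB2 (h, t)]
  show eA.symm (vA h t) = _
  rw [AlgEquiv.symm_apply_eq, eA_apply, ΦA_target]

end Stmt5

/-- `A` is a free `ℤ`-module with basis the elements
`z_{a₁,b₁}·r'·z_{a₂,b₂}·r'·⋯·r'·z_{a_{m+1},b_{m+1}}`, indexed by a first pair `(a₁,b₁)`
together with the list of remaining pairs. -/
theorem stmt_5 :
    ∃ B : Module.Basis ((ℕ × ℕ) × List (ℕ × ℕ)) ℤ Alg,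
      ∀ (h : ℕ × ℕ) (t : List (ℕ × ℕ)),
        B (h, t) = z h.1 h.2 * (t.map fun q => rA * z q.1 q.2).prod := by
  exact Stmt5.final
end
end

section
/- For all integers a, b ≥ 1, the identity a·[z_{a−1,b}·x − x·z_{a−1,b}] + b·[z_{a,b−1}·y − y·z_{a,b−1}] = 0 holds in V. -/
noncomputable section

/-- The two-sided ideal `Ar'A` of `A` generated by `r'`, as an additive subgroup. -/
def idealR : AddSubgroup Alg := AddSubgroup.closure {x | ∃ a b : Alg, x = a * rA * b}

/-- The additive subgroup `[Ar'A, A]` of `A`. -/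
def commIdealR : AddSubgroup Alg :=
  AddSubgroup.closure {x | ∃ u v : Alg, u ∈ idealR ∧ x = u * v - v * u}

/-- `V := A/[Ar'A, A]`. -/
abbrev V : Type := Alg ⧸ commIdealR

/-- The quotient map `A → V`. -/
def mkV : Alg →+ V := QuotientAddGroup.mk' _

-- basic lemmas
lemma gen_mem (p q : Alg) : p * rA * q ∈ idealR :=
  AddSubgroup.subset_closure ⟨p, q, rfl⟩

lemma idealR_mul_left (c : Alg) {g : Alg} (hg : g ∈ idealR) : c * g ∈ idealR := by
  have h : AddSubgroup.closure {x : Alg | ∃ p q : Alg, x = p * rA * q}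
      ≤ idealR.comap (AddMonoidHom.mulLeft c) := by
    rw [AddSubgroup.closure_le]
    rintro x ⟨p, q, rfl⟩
    show c * (p * rA * q) ∈ idealR
    have e : c * (p * rA * q) = (c * p) * rA * q := by noncomm_ring
    rw [e]; exact gen_mem _ _
  exact h hg

lemma idealR_mul_right {g : Alg} (hg : g ∈ idealR) (c : Alg) : g * c ∈ idealR := by
  have h : AddSubgroup.closure {x : Alg | ∃ p q : Alg, x = p * rA * q}
      ≤ idealR.comap (AddMonoidHom.mulRight c) := by
    rw [AddSubgroup.closure_le]
    rintro x ⟨p, q, rfl⟩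
    show (p * rA * q) * c ∈ idealR
    have e : (p * rA * q) * c = p * rA * (q * c) := by noncomm_ring
    rw [e]; exact gen_mem _ _
  exact h hg

lemma relAlg : xA * yA - yA * xA + rA = 0 := by
  have h := RingQuot.mkRingHom_rel (r := relA) (x := xF * yF - yF * xF + rF) (y := 0) ⟨rfl, rfl⟩
  simpa [πA, xA, yA, rA, map_sub, map_add, map_mul] using h

lemma surjA : Function.Surjective πA := RingQuot.mkRingHom_surjective relA

lemma comm_xA (w : Alg) : xA * w - w * xA ∈ idealR := by
  obtain ⟨f, rfl⟩ := surjA w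
  induction f using FreeAlgebra.induction with
  | grade0 r =>
      have : πA (algebraMap ℤ F3 r) = ((r : ℤ) : Alg) := by
        exact eq_intCast (πA.comp (algebraMap ℤ F3)) r
      rw [this, (Int.cast_commute r xA).eq, sub_self]
      exact idealR.zero_mem
  | grade1 i =>
      fin_cases i
      · show xA * xA - xA * xA ∈ idealR
        rw [sub_self]; exact idealR.zero_mem
      · show xA * yA - yA * xA ∈ idealR
        have h : xA * yA - yA * xA = -(1 * rA * 1) := by
          rw [one_mul, mul_one]; exact eq_neg_of_add_eq_zero_left relAlg
        rw [h]; exact idealR.neg_mem (gen_mem 1 1)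
      · show xA * rA - rA * xA ∈ idealR
        have h : xA * rA - rA * xA = (xA * rA * 1) - (1 * rA * xA) := by noncomm_ring
        rw [h]; exact idealR.sub_mem (gen_mem _ _) (gen_mem _ _)
  | mul p q hp hq =>
      rw [map_mul]
      have h : xA * (πA p * πA q) - (πA p * πA q) * xA
          = (xA * πA p - πA p * xA) * πA q + πA p * (xA * πA q - πA q * xA) := by
        simp only [sub_mul, mul_sub, mul_assoc]; abel
      rw [h]
      exact idealR.add_mem (idealR_mul_right hp _) (idealR_mul_left _ hq)
  | add p q hp hq =>
      rw [map_add]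
      have h : xA * (πA p + πA q) - (πA p + πA q) * xA
          = (xA * πA p - πA p * xA) + (xA * πA q - πA q * xA) := by
        simp only [add_mul, mul_add]; abel
      rw [h]
      exact idealR.add_mem hp hq

lemma comm_yA (w : Alg) : yA * w - w * yA ∈ idealR := by
  obtain ⟨f, rfl⟩ := surjA w
  induction f using FreeAlgebra.induction with
  | grade0 r =>
      have : πA (algebraMap ℤ F3 r) = ((r : ℤ) : Alg) := by
        exact eq_intCast (πA.comp (algebraMap ℤ F3)) r
      rw [this, (Int.cast_commute r yA).eq, sub_self]
      exact idealR.zero_mem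
  | grade1 i =>
      fin_cases i
      · show yA * xA - xA * yA ∈ idealR
        have h : yA * xA - xA * yA = 1 * rA * 1 := by
          rw [one_mul, mul_one]
          have h2 : rA = -(xA * yA - yA * xA) := eq_neg_of_add_eq_zero_right relAlg
          rw [h2, neg_sub]
        rw [h]; exact gen_mem 1 1
      · show yA * yA - yA * yA ∈ idealR
        rw [sub_self]; exact idealR.zero_mem
      · show yA * rA - rA * yA ∈ idealR
        have h : yA * rA - rA * yA = (yA * rA * 1) - (1 * rA * yA) := by noncomm_ring
        rw [h]; exact idealR.sub_mem (gen_mem _ _) (gen_mem _ _)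
  | mul p q hp hq =>
      rw [map_mul]
      have h : yA * (πA p * πA q) - (πA p * πA q) * yA
          = (yA * πA p - πA p * yA) * πA q + πA p * (yA * πA q - πA q * yA) := by
        simp only [sub_mul, mul_sub, mul_assoc]; abel
      rw [h]
      exact idealR.add_mem (idealR_mul_right hp _) (idealR_mul_left _ hq)
  | add p q hp hq =>
      rw [map_add]
      have h : yA * (πA p + πA q) - (πA p + πA q) * yA
          = (yA * πA p - πA p * yA) + (yA * πA q - πA q * yA) := by
        simp only [add_mul, mul_add]; abel
      rw [h]
      exact idealR.add_mem hp hq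

lemma comm_rA (w : Alg) : rA * w - w * rA ∈ idealR := by
  have h : rA * w - w * rA = (1 * rA * w) - (w * rA * 1) := by noncomm_ring
  rw [h]; exact idealR.sub_mem (gen_mem _ _) (gen_mem _ _)

/-- All commutators lie in the ideal generated by `r'`. -/
lemma comm_mem (p w : Alg) : p * w - w * p ∈ idealR := by
  obtain ⟨f, rfl⟩ := surjA p
  induction f using FreeAlgebra.induction with
  | grade0 r =>
      have : πA (algebraMap ℤ F3 r) = ((r : ℤ) : Alg) := by
        exact eq_intCast (πA.comp (algebraMap ℤ F3)) r
      rw [this, ((Int.cast_commute r w).symm).eq, sub_self]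
      exact idealR.zero_mem
  | grade1 i =>
      fin_cases i
      · exact comm_xA w
      · exact comm_yA w
      · exact comm_rA w
  | mul p q hp hq =>
      rw [map_mul]
      have h : (πA p * πA q) * w - w * (πA p * πA q)
          = πA p * (πA q * w - w * πA q) + (πA p * w - w * πA p) * πA q := by
        simp only [sub_mul, mul_sub, mul_assoc]; abel
      rw [h]
      exact idealR.add_mem (idealR_mul_left _ hq) (idealR_mul_right hp _)
  | add p q hp hq =>
      rw [map_add]
      have h : (πA p + πA q) * w - w * (πA p + πA q)
          = (πA p * w - w * πA p) + (πA q * w - w * πA q) := by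
        simp only [add_mul, mul_add]; abel
      rw [h]
      exact idealR.add_mem hp hq

lemma mkV_eq_zero {w : Alg} (h : w ∈ commIdealR) : mkV w = 0 := by
  have : mkV w = QuotientAddGroup.mk w := rfl
  rw [this, QuotientAddGroup.eq_zero_iff]
  exact h

lemma tau_comm {g : Alg} (hg : g ∈ idealR) (w : Alg) : mkV (g * w - w * g) = 0 :=
  mkV_eq_zero (AddSubgroup.subset_closure ⟨g, w, hg, rfl⟩)

/-- trace of a commutator -/
def tau2 (w g : Alg) : V := mkV (w * g - g * w)

/-- rotation invariance of `τ([SgT, g])`. -/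
lemma L2 (S T g : Alg) : tau2 (S * g * T) g = tau2 (T * g * S) g := by
  set A := S * g - g * S with hA
  set B := T * g - g * T with hB
  have hAm : A ∈ idealR := comm_mem S g
  have hBm : B ∈ idealR := comm_mem T g
  have key : (S * g * T * g - g * (S * g * T)) - (T * g * S * g - g * (T * g * S))
      = -(B * (S * g) - (S * g) * B) + (A * (T * g) - (T * g) * A) - (A * B - B * A) := by
    rw [hA, hB]
    simp only [sub_mul, mul_sub, mul_assoc]; abel
  have : tau2 (S * g * T) g - tau2 (T * g * S) g = 0 := by
    show mkV _ - mkV _ = 0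
    rw [← map_sub mkV, key, map_sub, map_add, map_neg, tau_comm hBm, tau_comm hAm, tau_comm hAm]
    abel
  exact sub_eq_zero.mp this

lemma tele (f : ℕ → V) (d : V) :
    ∀ n : ℕ, (∀ k, k < n → f k - f (k + 1) = d) → f 0 - f n = n • d := by
  intro n
  induction n with
  | zero => intro _; simp [zero_nsmul]
  | succ n ih =>
      intro h
      have h1 := ih (fun k hk => h k (by omega))
      have h2 := h n (by omega)
      calc f 0 - f (n + 1) = (f 0 - f n) + (f n - f (n + 1)) := by abel
        _ = n • d + d := by rw [h1, h2]
        _ = (n + 1) • d := (succ_nsmul d n).symm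

lemma shuffle (p q : Alg) : ∀ n : ℕ, p * (q * p) ^ n = (p * q) ^ n * p := by
  intro n
  induction n with
  | zero => simp
  | succ n ih =>
      rw [pow_succ', ← mul_assoc, show p * (q * p) = (p * q) * p from by rw [mul_assoc],
        mul_assoc, ih, ← mul_assoc, ← pow_succ']

lemma core (u v : Alg) (m s : ℕ) :
    (m + s + 2) • tau2 ((u * v) ^ (m + 1) * u ^ s) u
      + (m + 1) • tau2 ((u * v) ^ m * u ^ (s + 2)) v = 0 := by
  -- C3 : tail rotations
  have C3 : ∀ i j, i + j = s →
      tau2 (u ^ i * (u * v) ^ (m + 1) * u ^ j) u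
        = tau2 ((u * v) ^ (m + 1) * u ^ s) u := by
    intro i
    induction i with
    | zero =>
        intro j hj
        rw [show j = s from by omega]
        have e : u ^ 0 * (u * v) ^ (m + 1) * u ^ s = (u * v) ^ (m + 1) * u ^ s := by
          rw [pow_zero, one_mul]
        rw [e]
    | succ i ih =>
        intro j hj
        have e1 : u ^ (i + 1) * (u * v) ^ (m + 1) * u ^ j
            = 1 * u * (u ^ i * (u * v) ^ (m + 1) * u ^ j) := by
          simp only [pow_succ', one_mul, mul_assoc]
        have e2 : (u ^ i * (u * v) ^ (m + 1) * u ^ j) * u * 1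
            = u ^ i * (u * v) ^ (m + 1) * u ^ (j + 1) := by
          simp only [pow_succ, mul_one, mul_assoc]
        rw [e1, L2 1 (u ^ i * (u * v) ^ (m + 1) * u ^ j) u, e2]
        exact ih (j + 1) (by omega)
  -- C1 : τ([v·(uv)^i·u^{s+1}·(uv)^k, u]) = cx
  have C1 : ∀ k i, i + k = m →
      tau2 (v * ((u * v) ^ i * u ^ (s + 1) * (u * v) ^ k)) u
        = tau2 ((u * v) ^ (m + 1) * u ^ s) u := by
    intro k
    induction k with
    | zero =>
        intro i hi
        rw [show i = m from by omega]
        have e1 : v * ((u * v) ^ m * u ^ (s + 1) * (u * v) ^ 0)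
            = (v * ((u * v) ^ m * u ^ s)) * u * 1 := by
          simp only [pow_zero, mul_one, pow_succ, mul_assoc]
        have e2 : 1 * u * (v * ((u * v) ^ m * u ^ s)) = (u * v) ^ (m + 1) * u ^ s := by
          simp only [one_mul, pow_succ', mul_assoc]
        rw [e1, L2 (v * ((u * v) ^ m * u ^ s)) 1 u, e2]
    | succ k ih =>
        intro i hi
        have e1 : v * ((u * v) ^ i * u ^ (s + 1) * (u * v) ^ (k + 1))
            = (v * ((u * v) ^ i * u ^ (s + 1) * (u * v) ^ k)) * u * v := by
          simp only [pow_succ, mul_assoc]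
        have e2 : v * u * (v * ((u * v) ^ i * u ^ (s + 1) * (u * v) ^ k))
            = v * ((u * v) ^ (i + 1) * u ^ (s + 1) * (u * v) ^ k) := by
          simp only [pow_succ', mul_assoc]
        rw [e1, L2 (v * ((u * v) ^ i * u ^ (s + 1) * (u * v) ^ k)) v u, e2]
        exact ih (i + 1) (by omega)
  -- C2 : τ([(uv)^i·u^{s+1}·(uv)^k·u, v]) = cy
  have C2 : ∀ k i, i + k = m →
      tau2 ((u * v) ^ i * u ^ (s + 1) * (u * v) ^ k * u) v
        = tau2 ((u * v) ^ m * u ^ (s + 2)) v := by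
    intro k
    induction k with
    | zero =>
        intro i hi
        rw [show i = m from by omega]
        have e : (u * v) ^ m * u ^ (s + 1) * (u * v) ^ 0 * u
            = (u * v) ^ m * u ^ (s + 2) := by
          simp only [pow_zero, mul_one, pow_succ, mul_assoc]
        rw [e]
    | succ k ih =>
        intro i hi
        have e1 : (u * v) ^ i * u ^ (s + 1) * (u * v) ^ (k + 1) * u
            = ((u * v) ^ i * u ^ (s + 1) * (u * v) ^ k * u) * v * u := by
          simp only [pow_succ, mul_assoc]
        have e2 : u * v * ((u * v) ^ i * u ^ (s + 1) * (u * v) ^ k * u)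
            = (u * v) ^ (i + 1) * u ^ (s + 1) * (u * v) ^ k * u := by
          simp only [pow_succ', mul_assoc]
        rw [e1, L2 ((u * v) ^ i * u ^ (s + 1) * (u * v) ^ k * u) u v, e2]
        exact ih (i + 1) (by omega)
  -- the two telescoping computations
  have hP : ∀ k, k < m + 1 →
      mkV ((u * v) ^ (m + 1 - k) * u ^ (s + 1) * (u * v) ^ k)
        - mkV ((u * v) ^ (m + 1 - (k + 1)) * u ^ (s + 1) * (u * v) ^ (k + 1))
        = -(tau2 ((u * v) ^ (m + 1) * u ^ s) u + tau2 ((u * v) ^ m * u ^ (s + 2)) v) := by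
    intro k hk
    obtain ⟨i, h1, h2, h3⟩ : ∃ i, m + 1 - k = i + 1 ∧ m + 1 - (k + 1) = i ∧ i + k = m :=
      ⟨m - k, by omega, by omega, by omega⟩
    rw [h1, h2]
    have eL : (u * v) ^ (i + 1) * u ^ (s + 1) * (u * v) ^ k
        = u * v * ((u * v) ^ i * u ^ (s + 1) * (u * v) ^ k) := by
      simp only [pow_succ', mul_assoc]
    have eR : (u * v) ^ i * u ^ (s + 1) * (u * v) ^ (k + 1)
        = ((u * v) ^ i * u ^ (s + 1) * (u * v) ^ k) * (u * v) := by
      simp only [pow_succ, mul_assoc]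
    have key : u * v * ((u * v) ^ i * u ^ (s + 1) * (u * v) ^ k)
          - ((u * v) ^ i * u ^ (s + 1) * (u * v) ^ k) * (u * v)
        = -((v * ((u * v) ^ i * u ^ (s + 1) * (u * v) ^ k)) * u
              - u * (v * ((u * v) ^ i * u ^ (s + 1) * (u * v) ^ k)))
          - (((u * v) ^ i * u ^ (s + 1) * (u * v) ^ k * u) * v
              - v * ((u * v) ^ i * u ^ (s + 1) * (u * v) ^ k * u)) := by
      simp only [sub_mul, mul_sub, mul_assoc]; abel
    have hC1 : mkV ((v * ((u * v) ^ i * u ^ (s + 1) * (u * v) ^ k)) * u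
          - u * (v * ((u * v) ^ i * u ^ (s + 1) * (u * v) ^ k)))
        = tau2 ((u * v) ^ (m + 1) * u ^ s) u := C1 k i h3
    have hC2 : mkV (((u * v) ^ i * u ^ (s + 1) * (u * v) ^ k * u) * v
          - v * ((u * v) ^ i * u ^ (s + 1) * (u * v) ^ k * u))
        = tau2 ((u * v) ^ m * u ^ (s + 2)) v := C2 k i h3
    rw [eL, eR, ← map_sub mkV, key, map_sub mkV, map_neg mkV, hC1, hC2]
    abel
  have hQ : ∀ j, j < s + 1 →
      mkV (u ^ j * (u * v) ^ (m + 1) * u ^ (s + 1 - j))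
        - mkV (u ^ (j + 1) * (u * v) ^ (m + 1) * u ^ (s + 1 - (j + 1)))
        = tau2 ((u * v) ^ (m + 1) * u ^ s) u := by
    intro j hj
    obtain ⟨i, h1, h2, h3⟩ : ∃ i, s + 1 - j = i + 1 ∧ s + 1 - (j + 1) = i ∧ i + j = s :=
      ⟨s - j, by omega, by omega, by omega⟩
    rw [h1, h2]
    have eL : u ^ j * (u * v) ^ (m + 1) * u ^ (i + 1)
        = (u ^ j * (u * v) ^ (m + 1) * u ^ i) * u := by
      simp only [pow_succ, mul_assoc]
    have eR : u ^ (j + 1) * (u * v) ^ (m + 1) * u ^ i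
        = u * (u ^ j * (u * v) ^ (m + 1) * u ^ i) := by
      simp only [pow_succ', mul_assoc]
    rw [eL, eR, ← map_sub mkV]
    exact C3 j i (by omega)
  have TP := tele (fun k => mkV ((u * v) ^ (m + 1 - k) * u ^ (s + 1) * (u * v) ^ k))
    (-(tau2 ((u * v) ^ (m + 1) * u ^ s) u + tau2 ((u * v) ^ m * u ^ (s + 2)) v)) (m + 1) hP
  have TQ := tele (fun j => mkV (u ^ j * (u * v) ^ (m + 1) * u ^ (s + 1 - j)))
    (tau2 ((u * v) ^ (m + 1) * u ^ s) u) (s + 1) hQ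
  try simp only at TP TQ
  have E0 : mkV ((u * v) ^ (m + 1 - 0) * u ^ (s + 1) * (u * v) ^ 0)
      = mkV (u ^ 0 * (u * v) ^ (m + 1) * u ^ (s + 1 - 0)) := by
    norm_num
  have E1 : mkV ((u * v) ^ (m + 1 - (m + 1)) * u ^ (s + 1) * (u * v) ^ (m + 1))
      = mkV (u ^ (s + 1) * (u * v) ^ (m + 1) * u ^ (s + 1 - (s + 1))) := by
    simp only [Nat.sub_self, pow_zero, one_mul, mul_one]
  have hE : (m + 1) • (-(tau2 ((u * v) ^ (m + 1) * u ^ s) u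
        + tau2 ((u * v) ^ m * u ^ (s + 2)) v))
      = (s + 1) • tau2 ((u * v) ^ (m + 1) * u ^ s) u := by
    rw [← TP, ← TQ, E0, E1]
  have dist : ∀ (n : ℕ) (x y : V), n • -(x + y) = -(n • x) - n • y := by
    intro n x y
    induction n with
    | zero => simp only [zero_nsmul]; abel
    | succ n ih => rw [succ_nsmul, succ_nsmul, succ_nsmul, ih]; abel
  rw [show m + s + 2 = (s + 1) + (m + 1) from by omega, add_nsmul, ← hE, dist]
  abel

lemma caseEq (u v : Alg) (n : ℕ) :
    tau2 ((v * u) ^ n * v) u + tau2 ((u * v) ^ n * u) v = 0 := by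
  have key : u * v * ((u * v) ^ n) - ((u * v) ^ n) * (u * v)
      = -((v * (u * v) ^ n) * u - u * (v * (u * v) ^ n))
        - (((u * v) ^ n * u) * v - v * ((u * v) ^ n * u)) := by
    simp only [sub_mul, mul_sub, mul_assoc]; abel
  have z0 : u * v * ((u * v) ^ n) - ((u * v) ^ n) * (u * v) = 0 := by
    rw [← pow_succ', ← pow_succ]; exact sub_self _
  have h := congrArg mkV key
  rw [z0, map_zero, map_sub, map_neg] at h
  have hX : mkV ((v * (u * v) ^ n) * u - u * (v * (u * v) ^ n))
      = tau2 ((v * u) ^ n * v) u := by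
    rw [shuffle v u n]; rfl
  have hY : mkV (((u * v) ^ n * u) * v - v * ((u * v) ^ n * u))
      = tau2 ((u * v) ^ n * u) v := rfl
  rw [hX, hY] at h
  calc tau2 ((v * u) ^ n * v) u + tau2 ((u * v) ^ n * u) v
      = -(-(tau2 ((v * u) ^ n * v) u) - tau2 ((u * v) ^ n * u) v) := by abel
    _ = -(0 : V) := by rw [← h]
    _ = 0 := neg_zero

/-- bridge for the boundary case `b = a + 1`. -/
lemma bridge (n : ℕ) : tau2 ((xA * yA) ^ (n + 1) * xA ^ 0) yA
    = tau2 ((yA * xA) ^ (n + 1) * yA ^ 0) yA := by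
  have e0 : (xA * yA) ^ (n + 1) * xA ^ 0 = ((xA * yA) ^ n * xA) * yA * 1 := by
    simp only [pow_zero, mul_one, pow_succ, mul_assoc]
  have e1 : 1 * yA * ((xA * yA) ^ n * xA) = (yA * xA) ^ (n + 1) * yA ^ 0 := by
    rw [one_mul, ← mul_assoc, shuffle yA xA n, mul_assoc, ← pow_succ, pow_zero, mul_one]
  rw [e0, L2 ((xA * yA) ^ n * xA) 1 yA, e1]


/-- For all `a, b ≥ 1`, the identity
`a·[z_{a−1,b}x − x·z_{a−1,b}] + b·[z_{a,b−1}y − y·z_{a,b−1}] = 0` holds in `V`. -/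
theorem stmt_7 (a b : ℕ) (ha : 1 ≤ a) (hb : 1 ≤ b) :
    a • mkV (z (a - 1) b * xA - xA * z (a - 1) b)
      + b • mkV (z a (b - 1) * yA - yA * z a (b - 1)) = 0 := by
  obtain ⟨a, rfl⟩ : ∃ a', a = a' + 1 := ⟨a - 1, by omega⟩
  obtain ⟨b, rfl⟩ : ∃ b', b = b' + 1 := ⟨b - 1, by omega⟩
  simp only [Nat.add_sub_cancel]
  show (a + 1) • tau2 (z a (b + 1)) xA + (b + 1) • tau2 (z (a + 1) b) yA = 0
  have smadd : ∀ (n : ℕ) (x y : V), n • x + n • y = n • (x + y) := by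
    intro n x y
    induction n with
    | zero => simp only [zero_nsmul]; abel
    | succ n ih => rw [succ_nsmul, succ_nsmul, succ_nsmul, ← ih]; abel
  rcases lt_trichotomy b a with h | h | h
  · -- case 1 : b < a
    have hz1 : z a (b + 1) = (xA * yA) ^ (b + 1) * xA ^ (a - 1 - b) := by
      unfold z; rw [if_pos (by omega), show a - (b + 1) = a - 1 - b from by omega]
    have hz2 : z (a + 1) b = (xA * yA) ^ b * xA ^ (a - 1 - b + 2) := by
      unfold z; rw [if_pos (by omega), show a + 1 - b = a - 1 - b + 2 from by omega]
    have hc := core xA yA b (a - 1 - b)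
    rw [show b + (a - 1 - b) + 2 = a + 1 from by omega] at hc
    rw [hz1, hz2]
    exact hc
  · -- case 2 : b = a
    subst h
    have hz1 : z b (b + 1) = (yA * xA) ^ b * yA := by
      unfold z; rw [if_neg (by omega), show b + 1 - b = 1 from by omega, pow_one]
    have hz2 : z (b + 1) b = (xA * yA) ^ b * xA := by
      unfold z; rw [if_pos (by omega), show b + 1 - b = 1 from by omega, pow_one]
    rw [hz1, hz2, smadd, caseEq xA yA b, smul_zero]
  · -- case 3 : a < b
    have hc := core yA xA a (b - 1 - a)
    rw [show a + (b - 1 - a) + 2 = b + 1 from by omega] at hc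
    have hz1 : z a (b + 1) = (yA * xA) ^ a * yA ^ (b - 1 - a + 2) := by
      unfold z; rw [if_neg (by omega), show b + 1 - a = b - 1 - a + 2 from by omega]
    rcases Nat.lt_or_ge (a + 1) b with h2 | h2
    · -- b ≥ a + 2
      have hz2 : z (a + 1) b = (yA * xA) ^ (a + 1) * yA ^ (b - 1 - a) := by
        unfold z; rw [if_neg (by omega), show b - (a + 1) = b - 1 - a from by omega]
      rw [hz1, hz2, add_comm]
      exact hc
    · -- b = a + 1
      obtain rfl : b = a + 1 := by omega
      have hz2 : z (a + 1) (a + 1) = (xA * yA) ^ (a + 1) * xA ^ 0 := by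
        unfold z; rw [if_pos (by omega), Nat.sub_self]
      rw [show a + 1 - 1 - a = 0 from by omega] at hc
      rw [hz1, hz2, show a + 1 - 1 - a = 0 from by omega, bridge a, add_comm]
      exact hc
end
end

section
/- Let S = (w_j)_{j∈J} be a confluent family in V and let W ⊆ V be the k-linear span of S. For each i ∈ I choose a subset R_i ⊆ k containing 0 that maps bijectively onto the quotient k/Y_i. Then every class of V/W has a unique representative of the form ∑_{i∈I} μ_i v_i with μ_i ∈ R_i for all i and all but finitely many μ_i equal to 0; that is, the assignment sending a finitely-supported family (μ_i)_{i∈I} with μ_i ∈ R_i to the class of ∑_i μ_i v_i is a bijection onto V/W. -/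
noncomputable section

private lemma dm_aux (I : Type*) [PartialOrder I] [DecidableEq I] (hdcc : WellFoundedLT I) :
    ∃ rel : Multiset I → Multiset I → Prop, WellFounded rel ∧
      ∀ (M Y : Multiset I) (i : I), i ∈ M → (∀ y ∈ Y, y < i) →
        rel (M.filter (· ≠ i) + Y) M := by
  classical
  haveI := hdcc
  obtain ⟨s, hext, hwo⟩ := IsWellFounded.exists_well_order_ge ((· < ·) : I → I → Prop)
  haveI := hwo
  haveI : IsTrichotomous I (Function.swap s) := IsTrichotomous.swap s
  refine ⟨fun M N => Finsupp.Lex (Function.swap s) (· < ·)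
      (Multiset.toFinsupp M) (Multiset.toFinsupp N), ?_, ?_⟩
  · exact InvImage.wf (fun M : Multiset I => Multiset.toFinsupp M) (Finsupp.Lex.wellFounded' (fun n h => Nat.not_lt_zero n h)
      (Nat.lt_wfRel.wf) (IsWellFounded.wf (r := s)))
  · intro M Y i hiM hY
    have hirr : ∀ a : I, ¬ s a a := fun a => irrefl_of s a
    have htr : ∀ {a b c : I}, s a b → s b c → s a c := fun h1 h2 => trans_of s h1 h2
    refine ⟨i, ?_, ?_⟩
    · intro j hj
      have hji : j ≠ i := by rintro rfl; exact hirr j hj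
      have hYj : j ∉ Y := fun hjY => hirr j (htr (hext _ _ (hY j hjY)) hj)
      simp only [Multiset.toFinsupp_apply, Multiset.count_add, Multiset.count_filter,
        if_pos hji, Multiset.count_eq_zero.2 hYj, add_zero]
    · have hYi : i ∉ Y := fun h => lt_irrefl i (hY i h)
      simp only [Multiset.toFinsupp_apply, Multiset.count_add, Multiset.count_filter,
        if_neg (not_not_intro rfl), Multiset.count_eq_zero.2 hYi, add_zero, zero_add]
      exact Multiset.count_pos.2 hiM

/-- **Diamond Lemma I.** Let `k` be a commutative ring and `V = I →₀ k` the free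
`k`-module with basis `(v_i)`, where `I` is partially ordered with the descending chain
condition. Let `S = (w_j)` be a family of elements each defining a reduction (with
leading index `ψ j`), which is confluent, and let `W` be the `k`-span of `S`. Choose,
for each `i`, a set `R i ⊆ k` containing `0` mapping bijectively onto `k/Y_i`, where
`Y_i` is the ideal generated by the leading coefficients of members of `S` with leading
index `i`. Then every class of `V/W` has a unique representative `∑ μ_i v_i` with
`μ_i ∈ R i` for all `i` (all but finitely many zero). -/
theorem stmt_11 (k : Type*) [CommRing k] (I : Type*) [PartialOrder I]
    (hdcc : WellFoundedLT I)
    (J : Type*) (S : J → (I →₀ k)) (ψ : J → I)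
    (hlead : ∀ j : J, S j (ψ j) ≠ 0)
    (hbound : ∀ (j : J) (i : I), S j i ≠ 0 → i ≤ ψ j)
    (hconf : ∀ i : I,
      Submodule.span k (S '' {j | ψ j = i}) ⊓ Finsupp.supported k k {ℓ | ℓ < i}
        ≤ Submodule.span k (S '' {j | ψ j < i}))
    (R : I → Set k) (hR0 : ∀ i, (0 : k) ∈ R i)
    (hRrep : ∀ (i : I) (c : k), ∃! ρ : k, ρ ∈ R i ∧
      c - ρ ∈ Ideal.span {c' | ∃ j : J, ψ j = i ∧ c' = S j i}) :
    Function.Bijective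
      (fun μ : {μ : I →₀ k // ∀ i, μ i ∈ R i} =>
        (Submodule.Quotient.mk (μ : I →₀ k) :
          (I →₀ k) ⧸ Submodule.span k (Set.range S))) := by
  classical
  obtain ⟨rel, hrelwf, hstep⟩ := dm_aux I hdcc
  -- applying a multiset sum of finsupps at a coordinate
  have happ : ∀ (m : Multiset (I →₀ k)) (ℓ : I),
      m.sum ℓ = (m.map (fun x : I →₀ k => x ℓ)).sum := fun m ℓ =>
    map_multiset_sum (Finsupp.applyAddHom (M := k) ℓ) m
  -- ====== Surjectivity core ======
  have main_surj : ∀ v : I →₀ k, ∃ μ : I →₀ k, (∀ i, μ i ∈ R i) ∧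
      v - μ ∈ Submodule.span k (Set.range S) := by
    have H : ∀ M : Multiset I, ∀ v : I →₀ k,
        (v.support.filter (fun i => v i ∉ R i)).val ≤ M →
        ∃ μ : I →₀ k, (∀ i, μ i ∈ R i) ∧ v - μ ∈ Submodule.span k (Set.range S) := by
      intro M
      induction M using hrelwf.induction with
      | _ M IH =>
        intro v hle
        by_cases hbad : v.support.filter (fun i => v i ∉ R i) = ∅
        · refine ⟨v, ?_, by simpa using Submodule.zero_mem _⟩
          intro i
          by_contra hi
          have hvne : v i ≠ 0 := fun h => hi (h ▸ hR0 i)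
          have : i ∈ v.support.filter (fun i => v i ∉ R i) :=
            Finset.mem_filter.2 ⟨Finsupp.mem_support_iff.2 hvne, hi⟩
          simp [hbad] at this
        · obtain ⟨i, hi⟩ := Finset.nonempty_iff_ne_empty.2 hbad
          have hiB := Finset.mem_filter.1 hi
          obtain ⟨ρ, ⟨hρR, hρI⟩, -⟩ := hRrep i (v i)
          rw [Ideal.span, Submodule.mem_span_set'] at hρI
          obtain ⟨n, f, g, hfg⟩ := hρI
          choose jw hjw1 hjw2 using fun t : Fin n => (g t).2
          set tv : I →₀ k := ∑ t : Fin n, f t • S (jw t) with htv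
          have htW : tv ∈ Submodule.span k (Set.range S) :=
            Submodule.sum_mem _ fun t _ =>
              Submodule.smul_mem _ _ (Submodule.subset_span ⟨jw t, rfl⟩)
          have htapp : ∀ ℓ, tv ℓ = ∑ t : Fin n, f t * S (jw t) ℓ := by
            intro ℓ
            rw [htv, Finsupp.finset_sum_apply]
            simp [smul_eq_mul]
          have ht_i : tv i = v i - ρ := by
            rw [htapp, ← hfg]
            refine Finset.sum_congr rfl fun t _ => ?_
            rw [← hjw2 t, smul_eq_mul]
          have ht_high : ∀ ℓ, ¬ ℓ ≤ i → tv ℓ = 0 := by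
            intro ℓ hℓ
            rw [htapp]
            refine Finset.sum_eq_zero fun t _ => ?_
            have : S (jw t) ℓ = 0 := by
              by_contra h
              exact hℓ (hjw1 t ▸ hbound (jw t) ℓ h)
            rw [this, mul_zero]
          set v' : I →₀ k := v - tv with hv'
          have hv'i : v' i = ρ := by
            rw [hv', Finsupp.sub_apply, ht_i]; ring
          have hv'h : ∀ ℓ, ¬ ℓ ≤ i → v' ℓ = v ℓ := by
            intro ℓ hℓ
            rw [hv', Finsupp.sub_apply, ht_high ℓ hℓ, sub_zero]
          set B' : Multiset I := (v'.support.filter (fun ℓ => v' ℓ ∉ R ℓ)).val with hB'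
          set Y : Multiset I := B'.filter (· < i) with hYdef
          have hiM : i ∈ M := Multiset.mem_of_le hle (by exact_mod_cast hi)
          have hrel : rel (M.filter (· ≠ i) + Y) M :=
            hstep M Y i hiM (fun y hy => (Multiset.mem_filter.1 hy).2)
          have hle' : B' ≤ M.filter (· ≠ i) + Y := by
            rw [Multiset.le_iff_count]
            intro ℓ
            by_cases hℓ : ℓ ∈ B'
            · have hcount1 : B'.count ℓ = 1 :=
                Multiset.count_eq_one_of_mem (v'.support.filter _).nodup hℓ
              rw [hcount1]
              by_cases hlt : ℓ < i
              · have : ℓ ∈ Y := Multiset.mem_filter.2 ⟨hℓ, hlt⟩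
                have := Multiset.count_pos.2 this
                rw [Multiset.count_add]; omega
              · have hℓB := Finset.mem_filter.1 (by exact_mod_cast hℓ)
                have hℓne : ℓ ≠ i := by
                  rintro rfl
                  exact hℓB.2 (hv'i ▸ hρR)
                have hnle : ¬ ℓ ≤ i := fun h => hlt (lt_of_le_of_ne h hℓne)
                have hvb : ℓ ∈ v.support.filter (fun i => v i ∉ R i) := by
                  refine Finset.mem_filter.2 ⟨Finsupp.mem_support_iff.2 ?_, ?_⟩
                  · rw [← hv'h ℓ hnle]
                    exact Finsupp.mem_support_iff.1 hℓB.1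
                  · rw [← hv'h ℓ hnle]; exact hℓB.2
                have : (1 : ℕ) ≤ M.count ℓ := by
                  have := Multiset.le_iff_count.1 hle ℓ
                  have h1 : 1 ≤ (v.support.filter (fun i => v i ∉ R i)).val.count ℓ :=
                    Multiset.count_pos.2 (by exact_mod_cast hvb)
                  omega
                rw [Multiset.count_add, Multiset.count_filter, if_pos hℓne]
                omega
            · rw [Multiset.count_eq_zero.2 hℓ]; exact Nat.zero_le _
          obtain ⟨μ, hμR, hμW⟩ := IH _ hrel v' hle'
          refine ⟨μ, hμR, ?_⟩
          have : v - μ = (v' - μ) + tv := by rw [hv']; abel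
          rw [this]
          exact Submodule.add_mem _ hμW htW
    intro v
    exact H _ v le_rfl
  -- ====== Key structural lemma ======
  have key : ∀ D : Set I, (∀ a b : I, a ≤ b → b ∈ D → a ∈ D) →
      ∀ w : I →₀ k, w ∈ Submodule.span k (Set.range S) → (∀ ℓ, w ℓ ≠ 0 → ℓ ∈ D) →
      w ∈ Submodule.span k (S '' {j | ψ j ∈ D}) := by
    intro D hD
    set F : k × J → (I →₀ k) := fun p => p.1 • S p.2 with hF
    have H : ∀ M : Multiset I, ∀ ms : Multiset (k × J),
        ((ms.filter (fun p => ψ p.2 ∉ D)).map (fun p => ψ p.2)) ≤ M →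
        (∀ ℓ, (ms.map F).sum ℓ ≠ 0 → ℓ ∈ D) →
        (ms.map F).sum ∈ Submodule.span k (S '' {j | ψ j ∈ D}) := by
      intro M
      induction M using hrelwf.induction with
      | _ M IH =>
        intro ms hle hsupp
        by_cases hA : ∀ p ∈ ms, ψ p.2 ∈ D
        · refine multiset_sum_mem _ fun x hx => ?_
          obtain ⟨p, hp, rfl⟩ := Multiset.mem_map.1 hx
          exact Submodule.smul_mem _ _ (Submodule.subset_span ⟨p.2, hA p hp, rfl⟩)
        · push_neg at hA
          obtain ⟨p₀, hp₀, hp₀D⟩ := hA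
          set Abad : Finset I :=
            ((ms.filter (fun p => ψ p.2 ∉ D)).map (fun p => ψ p.2)).toFinset with hAbad
          have hp₀A : ψ p₀.2 ∈ Abad := Multiset.mem_toFinset.2
            (Multiset.mem_map_of_mem _ (Multiset.mem_filter.2 ⟨hp₀, hp₀D⟩))
          obtain ⟨i, hiA, himax⟩ : ∃ a ∈ (Abad : Set I), ∀ a' ∈ (Abad : Set I), id a ≤ id a' → id a = id a' := by
            obtain ⟨a, ha, hm⟩ := Set.Finite.exists_maximalFor id (Abad : Set I)
              Abad.finite_toSet ⟨_, by exact_mod_cast hp₀A⟩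
            exact ⟨a, ha, fun a' h1 h2 => le_antisymm h2 (hm h1 h2)⟩
          simp only [id] at himax
          have hiA' : i ∈ Abad := by exact_mod_cast hiA
          have hiM : i ∈ M :=
            Multiset.mem_of_le hle (Multiset.mem_toFinset.1 hiA')
          have hiD : i ∉ D := by
            obtain ⟨p, hp, hpi⟩ := Multiset.mem_map.1 (Multiset.mem_toFinset.1 hiA')
            exact hpi ▸ (Multiset.mem_filter.1 hp).2
          have himax' : ∀ p ∈ ms, ψ p.2 ∉ D → i ≤ ψ p.2 → ψ p.2 = i := by
            intro p hp hpD hle2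
            have hmem : ψ p.2 ∈ (Abad : Set I) := by
              exact_mod_cast Multiset.mem_toFinset.2
                (Multiset.mem_map_of_mem _ (Multiset.mem_filter.2 ⟨hp, hpD⟩))
            exact (himax (ψ p.2) hmem hle2).symm
          set ms1 := ms.filter (fun p => ψ p.2 = i) with hms1
          set ms2 := ms.filter (fun p => ¬ ψ p.2 = i) with hms2
          have hsplit : ms1 + ms2 = ms := Multiset.filter_add_not _ ms
          set u := (ms1.map F).sum with hu
          set wA := (ms2.map F).sum with hwA
          have hw : (ms.map F).sum = u + wA := by
            rw [← hsplit, Multiset.map_add, Multiset.sum_add]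
          have hz2 : ∀ p ∈ ms2, (F p) i = 0 := by
            intro p hp
            have hp' := Multiset.mem_filter.1 hp
            have hSz : S p.2 i = 0 := by
              by_contra h
              have hle2 : i ≤ ψ p.2 := hbound _ _ h
              by_cases hpD : ψ p.2 ∈ D
              · exact hiD (hD i _ hle2 hpD)
              · exact hp'.2 (himax' p hp'.1 hpD hle2)
            simp [hF, hSz]
          have hwAi : wA i = 0 := by
            rw [hwA, happ, Multiset.map_map]
            refine Multiset.sum_eq_zero ?_
            intro x hx
            obtain ⟨p, hp, rfl⟩ := Multiset.mem_map.1 hx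
            exact hz2 p hp
          have hwi : (ms.map F).sum i = 0 := by
            by_contra h
            exact hiD (hsupp i h)
          have hui : u i = 0 := by
            have h2 := hwi
            rw [hw, Finsupp.add_apply, hwAi, add_zero] at h2
            exact h2
          have hu_supp : ∀ ℓ, u ℓ ≠ 0 → ℓ < i := by
            intro ℓ hℓ
            have hle2 : ℓ ≤ i := by
              by_contra hle2
              apply hℓ
              rw [hu, happ, Multiset.map_map]
              refine Multiset.sum_eq_zero ?_
              intro x hx
              obtain ⟨p, hp, rfl⟩ := Multiset.mem_map.1 hx
              have hp' := Multiset.mem_filter.1 hp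
              have hSz : S p.2 ℓ = 0 := by
                by_contra h
                exact hle2 (hp'.2 ▸ hbound _ _ h)
              simp [hF, hSz]
            rcases lt_or_eq_of_le hle2 with h | h
            · exact h
            · exact absurd (h ▸ hℓ) (not_not_intro hui)
          have hu1 : u ∈ Submodule.span k (S '' {j | ψ j = i}) := by
            refine multiset_sum_mem _ fun x hx => ?_
            obtain ⟨p, hp, rfl⟩ := Multiset.mem_map.1 hx
            exact Submodule.smul_mem _ _
              (Submodule.subset_span ⟨p.2, (Multiset.mem_filter.1 hp).2, rfl⟩)
          have hu2 : u ∈ Finsupp.supported k k {ℓ | ℓ < i} := by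
            rw [Finsupp.mem_supported]
            intro ℓ hℓ
            exact hu_supp ℓ (Finsupp.mem_support_iff.1 hℓ)
          have huC := hconf i ⟨hu1, hu2⟩
          rw [Submodule.mem_span_set'] at huC
          obtain ⟨n, f, g, hfg⟩ := huC
          choose jw hjw1 hjw2 using fun t : Fin n => (g t).2
          set msN : Multiset (k × J) :=
            Finset.univ.val.map (fun t : Fin n => (f t, jw t)) with hmsN
          have hmsNsum : (msN.map F).sum = u := by
            rw [hmsN, Multiset.map_map, ← hfg, Finset.sum]
            refine congrArg Multiset.sum (Multiset.map_congr rfl ?_)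
            intro t _
            simp only [Function.comp_apply, hF]
            rw [hjw2]
          set ms' := ms2 + msN with hms'
          have hsum' : (ms'.map F).sum = (ms.map F).sum := by
            rw [hms', Multiset.map_add, Multiset.sum_add, hmsNsum, hw, add_comm]
          set Y : Multiset I := (msN.filter (fun p => ψ p.2 ∉ D)).map (fun p => ψ p.2)
            with hYdef
          have hY : ∀ y ∈ Y, y < i := by
            intro y hy
            obtain ⟨p, hp, rfl⟩ := Multiset.mem_map.1 hy
            have hp2 := (Multiset.mem_filter.1 hp).1
            rw [hmsN] at hp2
            obtain ⟨t, -, rfl⟩ := Multiset.mem_map.1 hp2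
            exact hjw1 t
          have hpart1 : ((ms2.filter (fun p => ψ p.2 ∉ D)).map (fun p => ψ p.2))
              ≤ M.filter (· ≠ i) := by
            have e1 : ms2.filter (fun p => ψ p.2 ∉ D)
                = (ms.filter (fun p => ψ p.2 ∉ D)).filter (fun p => ¬ ψ p.2 = i) := by
              rw [hms2, Multiset.filter_filter, Multiset.filter_filter]
              refine Multiset.filter_congr ?_
              intro p _
              constructor
              · rintro ⟨h1, h2⟩; exact ⟨h2, h1⟩
              · rintro ⟨h1, h2⟩; exact ⟨h2, h1⟩
            have e2 : ((ms.filter (fun p => ψ p.2 ∉ D)).filter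
                  (fun p => ¬ ψ p.2 = i)).map (fun p => ψ p.2)
                = (((ms.filter (fun p => ψ p.2 ∉ D)).map (fun p => ψ p.2)).filter
                    (fun x => ¬ x = i)) := by
              rw [Multiset.filter_map]
              rfl
            rw [e1, e2]
            have : (M.filter (· ≠ i)) = M.filter (fun x => ¬ x = i) := rfl
            rw [this]
            exact Multiset.filter_le_filter _ hle
          have hle' : ((ms'.filter (fun p => ψ p.2 ∉ D)).map (fun p => ψ p.2))
              ≤ M.filter (· ≠ i) + Y := by
            rw [hms', Multiset.filter_add, Multiset.map_add]
            exact add_le_add hpart1 le_rfl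
          have hrel : rel (M.filter (· ≠ i) + Y) M := hstep M Y i hiM hY
          have hres := IH _ hrel ms' hle' (by
            intro ℓ h
            apply hsupp ℓ
            rwa [← hsum'])
          rwa [hsum'] at hres
    intro w hw hsupp
    rw [Finsupp.mem_span_range_iff_exists_finsupp] at hw
    obtain ⟨c, hc⟩ := hw
    set ms0 : Multiset (k × J) := c.support.val.map (fun j => (c j, j)) with hms0
    have hsum0 : (ms0.map F).sum = w := by
      rw [hms0, Multiset.map_map, ← hc, Finsupp.sum, Finset.sum]
      rfl
    have := H _ ms0 le_rfl (by rw [hsum0]; exact hsupp)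
    rwa [hsum0] at this
  -- ====== Conclusion ======
  constructor
  · intro μ μ' hq
    have hd : (μ : I →₀ k) - (μ' : I →₀ k) ∈ Submodule.span k (Set.range S) :=
      (Submodule.Quotient.eq _).1 hq
    set d : I →₀ k := (μ : I →₀ k) - (μ' : I →₀ k) with hddef
    by_cases hd0 : d = 0
    · exact Subtype.ext (by rwa [sub_eq_zero] at hd0)
    · exfalso
      have hne : (d.support : Set I).Nonempty := by
        simpa using Finsupp.support_nonempty_iff.2 hd0
      obtain ⟨i, hiS, himax⟩ : ∃ a ∈ (d.support : Set I), ∀ a' ∈ (d.support : Set I), id a ≤ id a' → id a = id a' := by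
        obtain ⟨a, ha, hm⟩ := Set.Finite.exists_maximalFor id (d.support : Set I)
          (d.support.finite_toSet) hne
        exact ⟨a, ha, fun a' h1 h2 => le_antisymm h2 (hm h1 h2)⟩
      simp only [id] at himax
      set D : Set I := {ℓ | ∃ m ∈ d.support, ℓ ≤ m} with hDdef
      have hDdown : ∀ a b : I, a ≤ b → b ∈ D → a ∈ D := by
        rintro a b hab ⟨m, hm, hbm⟩
        exact ⟨m, hm, hab.trans hbm⟩
      have hdD : ∀ ℓ, d ℓ ≠ 0 → ℓ ∈ D := fun ℓ hℓ =>
        ⟨ℓ, Finsupp.mem_support_iff.2 hℓ, le_rfl⟩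
      have hdmem := key D hDdown d hd hdD
      rw [Submodule.mem_span_set'] at hdmem
      obtain ⟨n, f, g, hfg⟩ := hdmem
      choose jw hjw1 hjw2 using fun t : Fin n => (g t).2
      have hdi : d i ∈ Ideal.span {c' | ∃ j : J, ψ j = i ∧ c' = S j i} := by
        rw [← hfg, Finsupp.finset_sum_apply]
        refine Submodule.sum_mem _ fun t _ => ?_
        rw [← hjw2 t, Finsupp.smul_apply, smul_eq_mul]
        by_cases hz : S (jw t) i = 0
        · rw [hz, mul_zero]; exact Submodule.zero_mem _
        · have h1 : i ≤ ψ (jw t) := hbound _ _ hz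
          obtain ⟨m, hm, h2⟩ := hjw1 t
          have : i = m := himax m hm (h1.trans h2)
          have hψ : ψ (jw t) = i := le_antisymm (this ▸ h2) h1
          exact Ideal.mul_mem_left _ _ (Submodule.subset_span ⟨jw t, hψ, rfl⟩)
      obtain ⟨ρ, -, huniq⟩ := hRrep i ((μ : I →₀ k) i)
      have e1 : (μ : I →₀ k) i = ρ := huniq _ ⟨μ.2 i, by simpa using Submodule.zero_mem _⟩
      have e2 : (μ' : I →₀ k) i = ρ := huniq _ ⟨μ'.2 i, by
        have : (μ : I →₀ k) i - (μ' : I →₀ k) i = d i := by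
          rw [hddef, Finsupp.sub_apply]
        rwa [this]⟩
      have : d i ≠ 0 := Finsupp.mem_support_iff.1 hiS
      apply this
      rw [hddef, Finsupp.sub_apply, e1, e2, sub_self]
  · intro q
    obtain ⟨v, rfl⟩ := Submodule.Quotient.mk_surjective _ q
    obtain ⟨μ, hμR, hμW⟩ := main_surj v
    refine ⟨⟨μ, hμR⟩, ?_⟩
    simp only
    rw [Submodule.Quotient.eq]
    have : μ - v = -(v - μ) := by abel
    rw [this]
    exact Submodule.neg_mem _ hμW
end
end
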